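/- Let Δ, ν be integers with Δ, ν ≥ 2 such that ⌈Δ/2⌉ does not divide ν, and let G₁ be a finite simple graph with no isolated vertices, maximum degree at most Δ, matching number at most ν, and exactly Δν + ⌊ν/⌈Δ/2⌉⌋·⌊Δ/2⌋ edges. Then there exists a finite simple graph G₂ with no isolated vertices, maximum degree at most Δ, matching number at most ν, exactly Δν + ⌊ν/⌈Δ/2⌉⌋·⌊Δ/2⌋ edges, and such that G₂ is не isomorphic to G₁. -/

import Mathlib

/-- The number of edges of a simple graph. -/
noncomputable def edgeCount {V : Type*} (G : SimpleGraph V) : ℕ := G.edgeSet.ncard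

/-- The independence number: largest size of a set of pairwise nonadjacent vertices. -/
noncomputable def indNum {V : Type*} (G : SimpleGraph V) : ℕ :=
  sSup {n | ∃ s : Finset V, (∀ x ∈ s, ∀ y ∈ s, ¬ G.Adj x y) ∧ s.card = n}

/-- A finite set of edges of `G` forming a matching (pairwise vertex-disjoint edges). -/
def IsMatchingFinset {V : Type*} (G : SimpleGraph V) (m : Finset (Sym2 V)) : Prop :=
  ↑m ⊆ G.edgeSet ∧ ∀ e ∈ m, ∀ f ∈ m, e ≠ f → ∀ v : V, ¬(v ∈ e ∧ v ∈ f)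

/-- The matching number: largest size of a matching. -/
noncomputable def matNum {V : Type*} (G : SimpleGraph V) : ℕ :=
  sSup {n | ∃ m : Finset (Sym2 V), IsMatchingFinset G m ∧ m.card = n}

/-- The maximum degree. -/
noncomputable def maxDeg {V : Type*} (G : SimpleGraph V) : ℕ :=
  ⨆ v, (G.neighborSet v).ncard

/-- `Gext α ν`: disjoint union of `K_{2ν+1}` with `α - 1` isolated vertices. -/
def Gext (α ν : ℕ) : SimpleGraph (Fin (2*ν+1) ⊕ Fin (α-1)) :=
  SimpleGraph.fromRel (fun x y => x.isLeft = true ∧ y.isLeft = true)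

/-- `Hext α ν`: the complete split graph: clique of size `ν` joined to an
independent set of size `α`. -/
def Hext (α ν : ℕ) : SimpleGraph (Fin ν ⊕ Fin α) :=
  SimpleGraph.fromRel (fun x _ => x.isLeft = true)

/-- `Fext α Δ`: disjoint union of `α` copies of `K_{Δ+1}`. -/
def Fext (α Δ : ℕ) : SimpleGraph (Fin α × Fin (Δ+1)) :=
  SimpleGraph.fromRel (fun x y => x.1 = y.1)

/-- `Jgraph Δ`: for even `Δ` this is `K_{Δ+1}`; for odd `Δ = 2j-1` it is `K_{2j}`
minus a perfect matching (vertices `2k, 2k+1` are nonadjacent) together with an extra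
vertex (the last one) joined to all but one (vertex `0`) of the other vertices. -/
def Jgraph (Δ : ℕ) : SimpleGraph (Fin (2*((Δ+1)/2)+1)) :=
  SimpleGraph.fromRel (fun x y =>
    if Δ % 2 = 0 then True
    else (x.val < 2*((Δ+1)/2) ∧ y.val < 2*((Δ+1)/2) ∧ x.val/2 ≠ y.val/2) ∨
         (x.val = 2*((Δ+1)/2) ∧ 0 < y.val ∧ y.val < 2*((Δ+1)/2)))

/-- `G` is edge-extremal for `(α, ν)`: it has independence number `α`, matching number `ν`,
and the maximum number of edges among all finite simple graphs with independence number `α`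
and matching number `ν`. -/
def EdgeExtremal {V : Type*} [Fintype V] (G : SimpleGraph V) (α ν : ℕ) : Prop :=
  indNum G = α ∧ matNum G = ν ∧
    ∀ (W : Type) [Fintype W] (H : SimpleGraph W),
      indNum H = α → matNum H = ν → edgeCount H ≤ edgeCount G
open Finset

namespace Aux

variable {V W : Type*}

def MB (G : SimpleGraph V) (b : ℕ) : Prop :=
  ∀ m : Finset (Sym2 V), IsMatchingFinset G m → m.card ≤ b

lemma matNum_le_of_MB {G : SimpleGraph V} {b : ℕ} (h : MB G b) : matNum G ≤ b := by
  apply csSup_le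
  · exact ⟨0, ∅, ⟨by simp, by simp⟩, by simp⟩
  · rintro n ⟨m, hm, rfl⟩
    exact h m hm

lemma edgeCount_eq [Fintype V] {G : SimpleGraph V} [DecidableRel G.Adj] :
    edgeCount G = G.edgeFinset.card := by
  rw [edgeCount, Set.ncard_eq_toFinset_card']
  exact congrArg Finset.card (by ext; simp)

lemma ncard_nbr_le_card [Fintype V] (G : SimpleGraph V) (v : V) :
    (G.neighborSet v).ncard ≤ Fintype.card V - 1 := by
  classical
  have hsub : G.neighborSet v ⊆ ↑(univ.erase v) := by
    intro u hu; simp [SimpleGraph.ne_of_adj G hu.symm]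
  calc (G.neighborSet v).ncard ≤ (↑(univ.erase v) : Set V).ncard :=
        Set.ncard_le_ncard hsub (Set.toFinite _)
  _ = Fintype.card V - 1 := by rw [Set.ncard_coe_finset, card_erase_of_mem (mem_univ v)]; simp

lemma ncard_nbr_le_of_subset [Fintype V] (G : SimpleGraph V) (v : V) (s : Finset V)
    (h : ∀ u, G.Adj v u → u ∈ s) :
    (G.neighborSet v).ncard ≤ s.card := by
  classical
  calc (G.neighborSet v).ncard ≤ (↑s : Set V).ncard :=
        Set.ncard_le_ncard (fun u hu => h u hu) (Set.toFinite _)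
  _ = s.card := Set.ncard_coe_finset s

lemma edgeCount_add_compl [Fintype V] (G : SimpleGraph V) :
    edgeCount G + edgeCount Gᶜ = (Fintype.card V).choose 2 := by
  classical
  have hdisj : Disjoint G.edgeSet Gᶜ.edgeSet := by
    rw [Set.disjoint_left]
    intro e he he'
    induction e using Sym2.ind with
    | _ x y =>
      exact ((SimpleGraph.mem_edgeSet _).mp he' : _).2 ((SimpleGraph.mem_edgeSet G).mp he)
  have hsup : G.edgeSet ∪ Gᶜ.edgeSet = (⊤ : SimpleGraph V).edgeSet := by
    rw [← SimpleGraph.edgeSet_sup, sup_compl_eq_top]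
  have := Set.ncard_union_eq hdisj (Set.toFinite _) (Set.toFinite _)
  rw [hsup] at this
  rw [edgeCount, edgeCount, ← this]
  rw [show (Fintype.card V).choose 2 = edgeCount (⊤ : SimpleGraph V) from ?_]
  · rfl
  · rw [edgeCount_eq, SimpleGraph.card_edgeFinset_top_eq_card_choose_two]

lemma edgeCount_of_image {n : ℕ} (H : SimpleGraph (Fin n)) (S : Finset (Fin n))
    (f : Fin n → Sym2 (Fin n))
    (hset : H.edgeSet = ↑(S.image f)) (hinj : Set.InjOn f ↑S) : edgeCount H = S.card := by
  rw [edgeCount, hset, Set.ncard_coe_finset, card_image_of_injOn hinj]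

lemma compl_exists_adj [Fintype V] (H : SimpleGraph V) (v : V) (s : Finset V)
    (h : ∀ u, H.Adj v u → u ∈ s) (hcard : s.card + 1 < Fintype.card V) :
    ∃ u, Hᶜ.Adj v u := by
  classical
  have hne : (univ \ insert v s).Nonempty := by
    apply card_pos.mp
    have h1 : (insert v s).card ≤ s.card + 1 := card_insert_le _ _
    have h2 : (univ \ insert v s).card = Fintype.card V - (insert v s).card := by
      rw [card_sdiff_of_subset (subset_univ _)]; rfl
    omega
  obtain ⟨u, hu⟩ := hne
  simp only [mem_sdiff, mem_insert, not_or] at hu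
  refine ⟨u, ?_⟩
  rw [SimpleGraph.compl_adj]
  exact ⟨fun hvu => hu.2.1 hvu.symm, fun hadj => hu.2.2 (h u hadj)⟩

lemma compl_ncard_nbr_le [Fintype V] (H : SimpleGraph V) (v : V) (s : Finset V)
    (hadj : ∀ u ∈ s, H.Adj v u) :
    (Hᶜ.neighborSet v).ncard ≤ Fintype.card V - 1 - s.card := by
  classical
  have hvs : v ∉ s := fun hv => (H.loopless.irrefl v) (hadj v hv)
  have hsub : Hᶜ.neighborSet v ⊆ ↑(univ \ insert v s) := by
    intro u hu
    obtain ⟨hne, hnadj⟩ := (SimpleGraph.compl_adj H v u).mp hu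
    simp only [coe_sdiff, coe_univ, Set.mem_diff, Set.mem_univ, true_and, coe_insert,
      Set.mem_insert_iff, not_or, mem_coe]
    exact ⟨fun h => hne h.symm, fun h => hnadj (hadj u h)⟩
  calc (Hᶜ.neighborSet v).ncard ≤ (↑(univ \ insert v s) : Set V).ncard :=
        Set.ncard_le_ncard hsub (Set.toFinite _)
  _ = (univ \ insert v s).card := Set.ncard_coe_finset _
  _ = Fintype.card V - 1 - s.card := by
      rw [card_sdiff_of_subset (subset_univ _), card_insert_of_notMem hvs, card_univ]
      omega

lemma MB_card [Fintype V] (G : SimpleGraph V) : MB G (Fintype.card V / 2) := by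
  classical
  intro m hm
  have key : 2 * m.card ≤ Fintype.card V := by
    have hdisj : ∀ e ∈ m, ∀ f ∈ m, e ≠ f →
        Disjoint (univ.filter (· ∈ e)) (univ.filter (· ∈ f)) := by
      intro e he f hf hne
      rw [Finset.disjoint_left]
      intro v hv hv'
      simp only [mem_filter, mem_univ, true_and] at hv hv'
      exact hm.2 e he f hf hne v ⟨hv, hv'⟩
    calc 2 * m.card = ∑ _e ∈ m, 2 := by simp [mul_comm]
    _ = ∑ e ∈ m, (univ.filter (· ∈ e)).card := by
        apply Finset.sum_congr rfl
        intro e he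
        have he' : e ∈ G.edgeSet := hm.1 he
        induction e using Sym2.ind with
        | _ x y =>
          have hxy : x ≠ y := ((SimpleGraph.mem_edgeSet G).mp he').ne
          have hs : (univ.filter (· ∈ s(x,y))) = {x, y} := by
            ext v; simp [Sym2.mem_iff]
          rw [hs, Finset.card_insert_of_notMem (by simp [hxy]), Finset.card_singleton]
    _ = (m.biUnion (fun e => univ.filter (· ∈ e))).card := (Finset.card_biUnion hdisj).symm
    _ ≤ Fintype.card V := by simpa using Finset.card_le_univ _
  omega

lemma MB_cover [DecidableEq V] {G : SimpleGraph V} (C : Finset V)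
    (h : ∀ x y, G.Adj x y → x ∈ C ∨ y ∈ C) : MB G C.card := by
  intro m hm
  have hch : ∀ e ∈ m, ∃ v, v ∈ C ∧ v ∈ e := by
    intro e he
    have he' := hm.1 he
    induction e using Sym2.ind with
    | _ x y =>
      rcases h x y ((SimpleGraph.mem_edgeSet G).mp he') with h1 | h1
      exacts [⟨x, h1, by simp⟩, ⟨y, h1, by simp⟩]
  choose φ hφC hφe using hch
  have : m.attach.card ≤ C.card := by
    apply Finset.card_le_card_of_injOn (fun e => φ e.1 e.2)
    · intro e _; exact hφC e.1 e.2
    · intro e1 _ e2 _ heq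
      by_contra hne
      have hne' : e1.1 ≠ e2.1 := fun h => hne (Subtype.ext h)
      exact hm.2 e1.1 e1.2 e2.1 e2.2 hne' (φ e1.1 e1.2) ⟨hφe e1.1 e1.2, by simp only at heq; rw [heq]; exact hφe e2.1 e2.2⟩
  simpa using this
def sumG (G : SimpleGraph V) (H : SimpleGraph W) : SimpleGraph (V ⊕ W) where
  Adj a b := (∃ x y, a = Sum.inl x ∧ b = Sum.inl y ∧ G.Adj x y) ∨
             (∃ x y, a = Sum.inr x ∧ b = Sum.inr y ∧ H.Adj x y)
  symm := Std.Symm.mk <| by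
    rintro a b (⟨x,y,rfl,rfl,h⟩|⟨x,y,rfl,rfl,h⟩)
    exacts [Or.inl ⟨y,x,rfl,rfl,h.symm⟩, Or.inr ⟨y,x,rfl,rfl,h.symm⟩]
  loopless := Std.Irrefl.mk <| by
    rintro a (⟨x,y,rfl,heq,h⟩|⟨x,y,rfl,heq,h⟩) <;>
      (injection heq with heq; subst heq; exact h.ne rfl)

@[simp] lemma sumG_adj_ll {G : SimpleGraph V} {H : SimpleGraph W} {x y : V} :
    (sumG G H).Adj (Sum.inl x) (Sum.inl y) ↔ G.Adj x y := by
  constructor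
  · rintro (⟨a,b,h1,h2,h⟩|⟨a,b,h1,h2,h⟩)
    · injection h1 with h1; injection h2 with h2; subst h1; subst h2; exact h
    · exact absurd h1 (by simp)
  · intro h; exact Or.inl ⟨x,y,rfl,rfl,h⟩

@[simp] lemma sumG_adj_rr {G : SimpleGraph V} {H : SimpleGraph W} {x y : W} :
    (sumG G H).Adj (Sum.inr x) (Sum.inr y) ↔ H.Adj x y := by
  constructor
  · rintro (⟨a,b,h1,h2,h⟩|⟨a,b,h1,h2,h⟩)
    · exact absurd h1 (by simp)
    · injection h1 with h1; injection h2 with h2; subst h1; subst h2; exact h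
  · intro h; exact Or.inr ⟨x,y,rfl,rfl,h⟩

@[simp] lemma sumG_adj_lr {G : SimpleGraph V} {H : SimpleGraph W} {x : V} {y : W} :
    ¬ (sumG G H).Adj (Sum.inl x) (Sum.inr y) := by
  rintro (⟨a,b,h1,h2,h⟩|⟨a,b,h1,h2,h⟩) <;> simp_all

@[simp] lemma sumG_adj_rl {G : SimpleGraph V} {H : SimpleGraph W} {x : W} {y : V} :
    ¬ (sumG G H).Adj (Sum.inr x) (Sum.inl y) := by
  rintro (⟨a,b,h1,h2,h⟩|⟨a,b,h1,h2,h⟩) <;> simp_all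

def unionN (k n : ℕ) (G : SimpleGraph (Fin n)) : SimpleGraph (Fin k × Fin n) where
  Adj a b := a.1 = b.1 ∧ G.Adj a.2 b.2
  symm := ⟨fun a b h => ⟨h.1.symm, h.2.symm⟩⟩
  loopless := ⟨fun a h => h.2.ne rfl⟩

@[simp] lemma unionN_adj {k n : ℕ} {G : SimpleGraph (Fin n)} {a b : Fin k × Fin n} :
    (unionN k n G).Adj a b ↔ a.1 = b.1 ∧ G.Adj a.2 b.2 := Iff.rfl

/-- Pull a matching through an edge-preserving map injective on a support set. -/
lemma MB_restrict {U : Type*} {G' : SimpleGraph U} {G : SimpleGraph V} {b : ℕ}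
    (hMB : MB G b) (p : U → V) (S : Set U)
    (hinj : Set.InjOn p S)
    (hadj : ∀ x y, G'.Adj x y → x ∈ S → y ∈ S → G.Adj (p x) (p y))
    (m : Finset (Sym2 U)) (hsub : ↑m ⊆ G'.edgeSet)
    (hdisj : ∀ e ∈ m, ∀ f ∈ m, e ≠ f → ∀ v : U, ¬(v ∈ e ∧ v ∈ f))
    (hS : ∀ e ∈ m, ∀ v ∈ e, v ∈ S) :
    m.card ≤ b := by
  classical
  set m' := m.image (Sym2.map p) with hm'
  have hker : ∀ e ∈ m, ∀ f ∈ m, Sym2.map p e = Sym2.map p f → e = f := by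
    intro e he f hf heq
    induction e using Sym2.ind with
    | _ x y =>
      induction f using Sym2.ind with
      | _ z w =>
        simp only [Sym2.map_pair_eq, Sym2.eq_iff] at heq
        have hx := hS _ he x (by simp); have hy := hS _ he y (by simp)
        have hz := hS _ hf z (by simp); have hw := hS _ hf w (by simp)
        rcases heq with ⟨h1, h2⟩ | ⟨h1, h2⟩
        · rw [hinj hx hz h1, hinj hy hw h2]
        · rw [hinj hx hw h1, hinj hy hz h2, Sym2.eq_swap]
  have hcard : m'.card = m.card := Finset.card_image_of_injOn (fun e he f hf => hker e he f hf)
  rw [← hcard]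
  apply hMB
  constructor
  · intro e' he'
    simp only [hm', coe_image, Set.mem_image, mem_coe] at he'
    obtain ⟨e, he, rfl⟩ := he'
    have hes := hsub he
    induction e using Sym2.ind with
    | _ x y =>
      have hadj' : G'.Adj x y := (SimpleGraph.mem_edgeSet G').mp hes
      simp only [Sym2.map_pair_eq]
      exact (SimpleGraph.mem_edgeSet G).mpr
        (hadj x y hadj' (hS _ he x (by simp)) (hS _ he y (by simp)))
  · intro e' he' f' hf' hne v hv
    simp only [hm', mem_image] at he' hf'
    obtain ⟨e, he, rfl⟩ := he'
    obtain ⟨f, hf, rfl⟩ := hf'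
    have hef : e ≠ f := fun h => hne (by rw [h])
    obtain ⟨u, hu, hupv⟩ := Sym2.mem_map.mp hv.1
    obtain ⟨w, hw, hwpv⟩ := Sym2.mem_map.mp hv.2
    have huw : u = w :=
      hinj (hS _ he u hu) (hS _ hf w hw) (by rw [hupv, hwpv])
    exact hdisj e he f hf hef u ⟨hu, huw ▸ hw⟩

lemma MB_sum {G : SimpleGraph V} {H : SimpleGraph W} {a b : ℕ}
    (hG : MB G a) (hH : MB H b) : MB (sumG G H) (a + b) := by
  classical
  intro m hm
  set mL := m.filter (fun e => ∀ v ∈ e, v.isLeft) with hmL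
  set mR := m.filter (fun e => ∀ v ∈ e, v.isRight) with hmR
  have hsub : m ⊆ mL ∪ mR := by
    intro e he
    have he' := hm.1 he
    induction e using Sym2.ind with
    | _ x y =>
      have hadj := (SimpleGraph.mem_edgeSet _).mp he'
      rcases x with x | x <;> rcases y with y | y
      · refine mem_union_left _ (mem_filter.2 ⟨he, ?_⟩)
        intro v hv; rcases Sym2.mem_iff.mp hv with rfl | rfl <;> rfl
      · exact absurd hadj (by simp)
      · exact absurd hadj (by simp)
      · refine mem_union_right _ (mem_filter.2 ⟨he, ?_⟩)
        intro v hv; rcases Sym2.mem_iff.mp hv with rfl | rfl <;> rfl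
  have hL : mL.card ≤ a := by
    rcases isEmpty_or_nonempty V with hV | ⟨⟨v₀⟩⟩
    · have : mL = ∅ := by
        rw [eq_empty_iff_forall_notMem]
        intro e he
        have hmem := (mem_filter.mp he).2 e.out.1 (Sym2.out_fst_mem e)
        rcases hx : e.out.1 with x | x
        · exact hV.elim x
        · rw [hx] at hmem; simp at hmem
      simp [this]
    · apply MB_restrict (G' := sumG G H) hG (Sum.elim id (fun _ => v₀)) {u | u.isLeft}
      · rintro (x|x) hx (y|y) hy h <;> simp_all
      · rintro (x|x) (y|y) h h1 h2 <;> simp_all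
      · intro e he; exact hm.1 (mem_filter.mp he).1
      · intro e he f hf; exact hm.2 e (mem_filter.mp he).1 f (mem_filter.mp hf).1
      · intro e he v hv; exact (mem_filter.mp he).2 v hv
  have hR : mR.card ≤ b := by
    rcases isEmpty_or_nonempty W with hW | ⟨⟨w₀⟩⟩
    · have : mR = ∅ := by
        rw [eq_empty_iff_forall_notMem]
        intro e he
        have hmem := (mem_filter.mp he).2 e.out.1 (Sym2.out_fst_mem e)
        rcases hx : e.out.1 with x | x
        · rw [hx] at hmem; simp at hmem
        · exact hW.elim x
      simp [this]
    · apply MB_restrict (G' := sumG G H) hH (Sum.elim (fun _ => w₀) id) {u | u.isRight}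
      · rintro (x|x) hx (y|y) hy h <;> simp_all
      · rintro (x|x) (y|y) h h1 h2 <;> simp_all
      · intro e he; exact hm.1 (mem_filter.mp he).1
      · intro e he f hf; exact hm.2 e (mem_filter.mp he).1 f (mem_filter.mp hf).1
      · intro e he v hv; exact (mem_filter.mp he).2 v hv
  calc m.card ≤ (mL ∪ mR).card := card_le_card hsub
  _ ≤ mL.card + mR.card := card_union_le _ _
  _ ≤ a + b := Nat.add_le_add hL hR

lemma MB_unionN {k n b : ℕ} {G : SimpleGraph (Fin n)} (h : MB G b) :
    MB (unionN k n G) (k * b) := by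
  classical
  intro m hm
  have hmono : ∀ e ∈ m, ∀ v ∈ e, ∀ w ∈ e, (v : Fin k × Fin n).1 = w.1 := by
    intro e he
    have he' := hm.1 he
    induction e using Sym2.ind with
    | _ x y =>
      have hadj := (SimpleGraph.mem_edgeSet _).mp he'
      intro v hv w hw
      rcases Sym2.mem_iff.mp hv with rfl | rfl <;>
        rcases Sym2.mem_iff.mp hw with rfl | rfl <;>
          first | rfl | (exact hadj.1) | (exact hadj.1.symm)
  rw [Finset.card_eq_sum_card_fiberwise
    (f := fun e : Sym2 (Fin k × Fin n) => e.out.1.1) (t := univ) (fun e _ => mem_univ _)]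
  have hfib : ∀ a : Fin k, (m.filter (fun e => e.out.1.1 = a)).card ≤ b := by
    intro a
    apply MB_restrict (G' := unionN k n G) h Prod.snd {u : Fin k × Fin n | u.1 = a}
    · intro u hu w hw huw
      exact Prod.ext (hu.trans hw.symm) huw
    · intro x y hadj _ _; exact hadj.2
    · intro e he; exact hm.1 (mem_filter.mp he).1
    · intro e he f hf; exact hm.2 e (mem_filter.mp he).1 f (mem_filter.mp hf).1
    · intro e he v hv
      have h1 := (mem_filter.mp he).2
      exact (hmono e (mem_filter.mp he).1 v hv e.out.1 (Sym2.out_fst_mem e)).trans h1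
  calc ∑ a : Fin k, (m.filter (fun e => e.out.1.1 = a)).card ≤ ∑ _a : Fin k, b :=
        Finset.sum_le_sum (fun a _ => hfib a)
  _ = k * b := by simp [mul_comm]
lemma nbrSet_sumG_inl (G : SimpleGraph V) (H : SimpleGraph W) (v : V) :
    (sumG G H).neighborSet (Sum.inl v) = Sum.inl '' (G.neighborSet v) := by
  ext u
  cases u with
  | inl x =>
      simp only [SimpleGraph.mem_neighborSet, Set.mem_image]
      constructor
      · rintro (⟨a,b,ha,hb,h⟩|⟨a,b,ha,hb,h⟩)
        · injection ha with ha; injection hb with hb; subst ha; subst hb; exact ⟨x, h, rfl⟩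
        · exact absurd ha (by simp)
      · rintro ⟨y, hy, hxy⟩; injection hxy with hxy; subst hxy; exact Or.inl ⟨v, y, rfl, rfl, hy⟩
  | inr x =>
      simp only [SimpleGraph.mem_neighborSet, Set.mem_image]
      constructor
      · rintro (⟨a,b,ha,hb,h⟩|⟨a,b,ha,hb,h⟩) <;> simp_all
      · rintro ⟨y, _, hxy⟩; simp at hxy

lemma nbrSet_sumG_inr (G : SimpleGraph V) (H : SimpleGraph W) (v : W) :
    (sumG G H).neighborSet (Sum.inr v) = Sum.inr '' (H.neighborSet v) := by
  ext u
  cases u with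
  | inr x =>
      simp only [SimpleGraph.mem_neighborSet, Set.mem_image]
      constructor
      · rintro (⟨a,b,ha,hb,h⟩|⟨a,b,ha,hb,h⟩)
        · exact absurd ha (by simp)
        · injection ha with ha; injection hb with hb; subst ha; subst hb; exact ⟨x, h, rfl⟩
      · rintro ⟨y, hy, hxy⟩; injection hxy with hxy; subst hxy; exact Or.inr ⟨v, y, rfl, rfl, hy⟩
  | inl x =>
      simp only [SimpleGraph.mem_neighborSet, Set.mem_image]
      constructor
      · rintro (⟨a,b,ha,hb,h⟩|⟨a,b,ha,hb,h⟩) <;> simp_all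
      · rintro ⟨y, _, hxy⟩; simp at hxy

lemma ncard_nbr_sumG_inl (G : SimpleGraph V) (H : SimpleGraph W) (v : V) :
    ((sumG G H).neighborSet (Sum.inl v)).ncard = (G.neighborSet v).ncard := by
  rw [nbrSet_sumG_inl, Set.ncard_image_of_injective _ Sum.inl_injective]

lemma ncard_nbr_sumG_inr (G : SimpleGraph V) (H : SimpleGraph W) (v : W) :
    ((sumG G H).neighborSet (Sum.inr v)).ncard = (H.neighborSet v).ncard := by
  rw [nbrSet_sumG_inr, Set.ncard_image_of_injective _ Sum.inr_injective]

lemma nbrSet_unionN {k n : ℕ} (G : SimpleGraph (Fin n)) (a : Fin k) (x : Fin n) :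
    (unionN k n G).neighborSet (a, x) = (fun y => (a, y)) '' (G.neighborSet x) := by
  ext u
  obtain ⟨b, y⟩ := u
  simp only [SimpleGraph.mem_neighborSet, Set.mem_image]
  constructor
  · rintro ⟨h1, h2⟩
    simp only at h1 h2
    subst h1
    exact ⟨y, h2, rfl⟩
  · rintro ⟨z, hz, hzy⟩
    have h1 : a = b := congrArg Prod.fst hzy
    have h2 : z = y := congrArg Prod.snd hzy
    subst h1; subst h2
    exact ⟨rfl, hz⟩
  

lemma ncard_nbr_unionN {k n : ℕ} (G : SimpleGraph (Fin n)) (a : Fin k) (x : Fin n) :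
    ((unionN k n G).neighborSet (a, x)).ncard = (G.neighborSet x).ncard := by
  rw [nbrSet_unionN, Set.ncard_image_of_injective _ (fun y z h => congrArg Prod.snd h)]

/-- handshake in ncard form -/
lemma sum_ncard_nbr [Fintype V] (G : SimpleGraph V) :
    ∑ v, (G.neighborSet v).ncard = 2 * edgeCount G := by
  classical
  have h1 : ∀ v, (G.neighborSet v).ncard = G.degree v := by
    intro v
    rw [Set.ncard_eq_toFinset_card']
    exact congrArg Finset.card (by ext u; simp)
  simp only [h1]
  rw [SimpleGraph.sum_degrees_eq_twice_card_edges]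
  rw [edgeCount, Set.ncard_eq_toFinset_card']
  exact congrArg _ (congrArg Finset.card (by ext; simp))

lemma edgeCount_sumG [Fintype V] [Fintype W] (G : SimpleGraph V) (H : SimpleGraph W) :
    edgeCount (sumG G H) = edgeCount G + edgeCount H := by
  have h := sum_ncard_nbr (sumG G H)
  rw [Fintype.sum_sum_type] at h
  simp only [ncard_nbr_sumG_inl, ncard_nbr_sumG_inr] at h
  rw [sum_ncard_nbr G, sum_ncard_nbr H] at h
  omega

lemma edgeCount_unionN {k n : ℕ} (G : SimpleGraph (Fin n)) :
    edgeCount (unionN k n G) = k * edgeCount G := by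
  have h := sum_ncard_nbr (unionN k n G)
  rw [Fintype.sum_prod_type] at h
  simp only [ncard_nbr_unionN] at h
  rw [Finset.sum_const, sum_ncard_nbr G] at h
  simp only [smul_eq_mul, card_univ, Fintype.card_fin] at h
  have : 2 * (k * edgeCount G) = 2 * edgeCount (unionN k n G) := by rw [← h]; ring
  omega

theorem transport [Fintype W] (G : SimpleGraph W) (b d E : ℕ)
    (hMB : MB G b) (hdeg : ∀ v, (G.neighborSet v).ncard ≤ d)
    (hisol : ∀ v, ∃ u, G.Adj v u) (hE : edgeCount G = E) :
    ∃ G₂ : SimpleGraph (Fin (Fintype.card W)),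
      (∀ v, ∃ u, G₂.Adj v u) ∧ maxDeg G₂ ≤ d ∧ matNum G₂ ≤ b ∧ edgeCount G₂ = E := by
  classical
  set e := Fintype.equivFin W with he
  set G₂ := SimpleGraph.comap (e.symm : Fin (Fintype.card W) → W) G with hG₂
  have hadj : ∀ a b, G₂.Adj a b ↔ G.Adj (e.symm a) (e.symm b) := fun a b => Iff.rfl
  refine ⟨G₂, ?_, ?_, ?_, ?_⟩
  · intro v
    obtain ⟨u, hu⟩ := hisol (e.symm v)
    exact ⟨e u, by rw [hadj]; simpa using hu⟩
  · apply ciSup_le'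
    intro v
    have hnb : G₂.neighborSet v = e '' (G.neighborSet (e.symm v)) := by
      ext u
      simp only [SimpleGraph.mem_neighborSet, Set.mem_image, hadj]
      constructor
      · intro h; exact ⟨e.symm u, h, by simp⟩
      · rintro ⟨y, hy, rfl⟩; simpa using hy
    rw [hnb, Set.ncard_image_of_injective _ e.injective]
    exact hdeg _
  · apply matNum_le_of_MB
    intro m hm
    exact MB_restrict hMB (e.symm : Fin (Fintype.card W) → W) Set.univ
      (Set.injOn_of_injective e.symm.injective)
      (fun x y h _ _ => h) m hm.1 hm.2 (fun _ _ _ _ => Set.mem_univ _)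
  · have hset : G₂.edgeSet = (Sym2.map e) '' G.edgeSet := by
      ext ed
      induction ed using Sym2.ind with
      | _ x y =>
        simp only [SimpleGraph.mem_edgeSet, hadj, Set.mem_image]
        constructor
        · intro h
          exact ⟨s(e.symm x, e.symm y), h, by simp [Sym2.map_pair_eq]⟩
        · rintro ⟨ed', hed', heq⟩
          induction ed' using Sym2.ind with
          | _ u v =>
            rw [Sym2.map_pair_eq, Sym2.eq_iff] at heq
            rcases heq with ⟨rfl, rfl⟩ | ⟨rfl, rfl⟩
            · simpa using hed'
            · simpa using (hed' : G.Adj u v).symm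
    rw [edgeCount, hset, Set.ncard_image_of_injective _ (Sym2.map.injective e.injective), ← hE]
    rfl
/-- star with Δ leaves -/
def star (Δ : ℕ) : SimpleGraph (Fin (Δ+1)) := SimpleGraph.fromRel (fun x _ => x.val = 0)

lemma star_adj {Δ : ℕ} {x y : Fin (Δ+1)} :
    (star Δ).Adj x y ↔ x ≠ y ∧ (x.val = 0 ∨ y.val = 0) := by
  simp [star, SimpleGraph.fromRel_adj]

lemma star_spec (Δ : ℕ) (hΔ : 3 ≤ Δ) :
    edgeCount (star Δ) = Δ ∧ (∀ v, ((star Δ).neighborSet v).ncard ≤ Δ) ∧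
    (∀ v, ∃ u, (star Δ).Adj v u) ∧
    (∀ x y, (star Δ).Adj x y → x = (⟨0, by omega⟩ : Fin (Δ+1)) ∨ y = ⟨0, by omega⟩) := by
  refine ⟨?_, ?_, ?_, ?_⟩
  · have hset : (star Δ).edgeSet =
        ↑((univ.filter (fun a : Fin (Δ+1) => a.val ≠ 0)).image
          (fun a => s((⟨0, by omega⟩ : Fin (Δ+1)), a))) := by
      ext e
      induction e using Sym2.ind with
      | _ x y =>
        simp only [SimpleGraph.mem_edgeSet, star_adj, coe_image, Set.mem_image, mem_coe,
          mem_filter, mem_univ, true_and]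
        constructor
        · rintro ⟨hne, h0 | h0⟩
          · refine ⟨y, ?_, ?_⟩
            · intro hy; exact hne (Fin.ext (by omega))
            · have : x = (⟨0, by omega⟩ : Fin (Δ+1)) := Fin.ext h0
              rw [this]
          · refine ⟨x, ?_, ?_⟩
            · intro hy; exact hne (Fin.ext (by omega))
            · have : y = (⟨0, by omega⟩ : Fin (Δ+1)) := Fin.ext h0
              rw [this, Sym2.eq_swap]
        · rintro ⟨a, ha, heq⟩
          rw [Sym2.eq_iff] at heq
          rcases heq with ⟨h1, h2⟩ | ⟨h1, h2⟩ <;> subst h1 <;> subst h2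
          · exact ⟨fun hh => ha (by simpa using (Fin.ext_iff.mp hh).symm), Or.inl rfl⟩
          · exact ⟨fun hh => ha (by simpa using Fin.ext_iff.mp hh), Or.inr rfl⟩
    have hcount := edgeCount_of_image _ _ _ hset ?_
    · rw [hcount]
      have : (univ.filter (fun a : Fin (Δ+1) => a.val ≠ 0)) =
          univ.erase (⟨0, by omega⟩ : Fin (Δ+1)) := by
        ext a; simp only [mem_filter, mem_univ, true_and, mem_erase, and_true, ne_eq, Fin.ext_iff, Fin.val_mk]
      rw [this, card_erase_of_mem (mem_univ _), card_univ, Fintype.card_fin]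
      omega
    · intro a ha b hb heq
      simp only [coe_filter, Set.mem_setOf_eq, mem_univ, true_and] at ha hb
      rw [Sym2.eq_iff] at heq
      rcases heq with ⟨_, h2⟩ | ⟨h1, h2⟩
      · exact h2
      · exact absurd (by simpa using (Fin.ext_iff.mp h1).symm : b.val = 0) hb
  · intro v
    have := ncard_nbr_le_card (star Δ) v
    simpa using this
  · intro v
    by_cases h : v.val = 0
    · exact ⟨⟨1, by omega⟩, star_adj.mpr ⟨by simp [Fin.ext_iff, h], Or.inl h⟩⟩
    · exact ⟨⟨0, by omega⟩, star_adj.mpr ⟨fun hh => h (Fin.ext_iff.mp hh), Or.inr rfl⟩⟩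
  · intro x y hxy
    rcases (star_adj.mp hxy).2 with h | h
    exacts [Or.inl (Fin.ext h), Or.inr (Fin.ext h)]

/-- complete bipartite K_{2,Δ} -/
def k2d (Δ : ℕ) : SimpleGraph (Fin (Δ+2)) :=
  SimpleGraph.fromRel (fun x y => x.val < 2 ∧ 2 ≤ y.val)

lemma k2d_adj {Δ : ℕ} {x y : Fin (Δ+2)} :
    (k2d Δ).Adj x y ↔ x ≠ y ∧ ((x.val < 2 ∧ 2 ≤ y.val) ∨ (y.val < 2 ∧ 2 ≤ x.val)) := by
  simp [k2d, SimpleGraph.fromRel_adj]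

lemma k2d_spec (Δ : ℕ) (hΔ : 3 ≤ Δ) :
    edgeCount (k2d Δ) = 2*Δ ∧ (∀ v, ((k2d Δ).neighborSet v).ncard ≤ Δ) ∧
    (∀ v, ∃ u, (k2d Δ).Adj v u) ∧
    (∀ x y, (k2d Δ).Adj x y → x ∈ ({⟨0, by omega⟩, ⟨1, by omega⟩} : Finset (Fin (Δ+2)))
      ∨ y ∈ ({⟨0, by omega⟩, ⟨1, by omega⟩} : Finset (Fin (Δ+2)))) := by
  classical
  refine ⟨?_, ?_, ?_, ?_⟩
  · set S : Finset (Fin (Δ+2)) := univ.filter (fun a => 2 ≤ a.val) with hS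
    have hScard : S.card = Δ := by
      have : S = (univ \ {(⟨0, by omega⟩ : Fin (Δ+2)), ⟨1, by omega⟩}) := by
        ext a
        simp only [hS, mem_filter, mem_univ, true_and, mem_sdiff, mem_insert, mem_singleton,
          not_or, Fin.ext_iff]
        omega
      rw [this, card_sdiff_of_subset (subset_univ _), card_univ, Fintype.card_fin]
      rw [card_insert_of_notMem (by simp [Fin.ext_iff]), card_singleton]
      omega
    have hset : (k2d Δ).edgeSet =
        ↑((S.image (fun a => s((⟨0, by omega⟩ : Fin (Δ+2)), a))) ∪
          (S.image (fun a => s((⟨1, by omega⟩ : Fin (Δ+2)), a)))) := by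
      ext e
      induction e using Sym2.ind with
      | _ x y =>
        simp only [SimpleGraph.mem_edgeSet, k2d_adj, coe_union, Set.mem_union, coe_image,
          Set.mem_image, mem_coe, hS, mem_filter, mem_univ, true_and]
        constructor
        · rintro ⟨hne, ⟨hx, hy⟩ | ⟨hy, hx⟩⟩
          · have hx01 : x = (⟨0, by omega⟩ : Fin (Δ+2)) ∨ x = ⟨1, by omega⟩ := by
              have : x.val = 0 ∨ x.val = 1 := by omega
              rcases this with h | h
              exacts [Or.inl (Fin.ext h), Or.inr (Fin.ext h)]
            rcases hx01 with hx0 | hx0 <;> rw [hx0]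
            exacts [Or.inl ⟨y, hy, rfl⟩, Or.inr ⟨y, hy, rfl⟩]
          · have hy01 : y = (⟨0, by omega⟩ : Fin (Δ+2)) ∨ y = ⟨1, by omega⟩ := by
              have : y.val = 0 ∨ y.val = 1 := by omega
              rcases this with h | h
              exacts [Or.inl (Fin.ext h), Or.inr (Fin.ext h)]
            rcases hy01 with hy0 | hy0 <;> rw [hy0]
            exacts [Or.inl ⟨x, hx, Sym2.eq_swap⟩, Or.inr ⟨x, hx, Sym2.eq_swap⟩]
        · rintro (⟨a, ha, heq⟩ | ⟨a, ha, heq⟩) <;> rw [Sym2.eq_iff] at heq <;>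
            rcases heq with ⟨h1, h2⟩ | ⟨h1, h2⟩ <;> subst h1 <;> subst h2 <;>
            refine ⟨fun hh => ?_, ?_⟩
          · have := Fin.ext_iff.mp hh; simp at this; omega
          · exact Or.inl ⟨by simp, ha⟩
          · have : a.val = 0 := Fin.ext_iff.mp hh; omega
          · exact Or.inr ⟨by simp, ha⟩
          · have := Fin.ext_iff.mp hh; simp at this; omega
          · exact Or.inl ⟨by simp, ha⟩
          · have := Fin.ext_iff.mp hh; simp at this; omega
          · exact Or.inr ⟨by simp, ha⟩
    rw [edgeCount, hset, Set.ncard_coe_finset]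
    have hdisj : Disjoint (S.image (fun a => s((⟨0, by omega⟩ : Fin (Δ+2)), a)))
        (S.image (fun a => s((⟨1, by omega⟩ : Fin (Δ+2)), a))) := by
      rw [disjoint_left]
      rintro e he he'
      simp only [mem_image, hS, mem_filter, mem_univ, true_and] at he he'
      obtain ⟨a, ha, rfl⟩ := he
      obtain ⟨b, hb, heq⟩ := he'
      rw [Sym2.eq_iff] at heq
      rcases heq with ⟨h1, h2⟩ | ⟨h1, h2⟩
      · have := Fin.ext_iff.mp h1; simp at this
      · have h1' := Fin.ext_iff.mp h1; have h2' := Fin.ext_iff.mp h2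
        simp at h1' h2'; omega
    rw [card_union_of_disjoint hdisj]
    have hinj0 : Set.InjOn (fun a => s((⟨0, by omega⟩ : Fin (Δ+2)), a)) ↑S := by
      intro a ha b hb heq
      simp only [coe_filter, Set.mem_setOf_eq, mem_univ, true_and, hS] at ha hb
      rw [Sym2.eq_iff] at heq
      rcases heq with ⟨_, h2⟩ | ⟨h1, h2⟩
      · exact h2
      · have h1' := Fin.ext_iff.mp h1; simp at h1'; omega
    have hinj1 : Set.InjOn (fun a => s((⟨1, by omega⟩ : Fin (Δ+2)), a)) ↑S := by
      intro a ha b hb heq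
      simp only [coe_filter, Set.mem_setOf_eq, mem_univ, true_and, hS] at ha hb
      rw [Sym2.eq_iff] at heq
      rcases heq with ⟨_, h2⟩ | ⟨h1, h2⟩
      · exact h2
      · have h1' := Fin.ext_iff.mp h1; simp at h1'; omega
    rw [card_image_of_injOn hinj0, card_image_of_injOn hinj1, hScard]
    ring
  · intro v
    by_cases hv : v.val < 2
    · apply le_trans (ncard_nbr_le_of_subset _ v (univ.filter (fun a => 2 ≤ a.val)) ?_)
      · have : (univ.filter (fun a : Fin (Δ+2) => 2 ≤ a.val)) =
            (univ \ {(⟨0, by omega⟩ : Fin (Δ+2)), ⟨1, by omega⟩}) := by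
          ext a
          simp only [mem_filter, mem_univ, true_and, mem_sdiff, mem_insert, mem_singleton,
            not_or, Fin.ext_iff]
          omega
        rw [this, card_sdiff_of_subset (subset_univ _), card_univ, Fintype.card_fin]
        rw [card_insert_of_notMem (by simp [Fin.ext_iff]), card_singleton]
        omega
      · intro u hu
        rcases (k2d_adj.mp hu).2 with ⟨_, h⟩ | ⟨h, _⟩
        · simp [h]
        · omega
    · apply le_trans (ncard_nbr_le_of_subset _ v
        ({(⟨0, by omega⟩ : Fin (Δ+2)), ⟨1, by omega⟩}) ?_)
      · calc ({(⟨0, by omega⟩ : Fin (Δ+2)), ⟨1, by omega⟩} : Finset _).card ≤ 2 :=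
              card_insert_le _ _ |>.trans (by simp)
        _ ≤ Δ := by omega
      · intro u hu
        rcases (k2d_adj.mp hu).2 with ⟨h, _⟩ | ⟨_, h⟩
        · omega
        · simp only [mem_insert, mem_singleton, Fin.ext_iff]; omega
  · intro v
    by_cases hv : v.val < 2
    · exact ⟨⟨2, by omega⟩, k2d_adj.mpr ⟨by simp [Fin.ext_iff]; omega, Or.inl ⟨hv, by simp⟩⟩⟩
    · exact ⟨⟨0, by omega⟩, k2d_adj.mpr ⟨fun hh => hv (by have : v.val = 0 := Fin.ext_iff.mp hh; omega),
        Or.inr ⟨by simp, by omega⟩⟩⟩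
  · intro x y hxy
    rcases (k2d_adj.mp hxy).2 with ⟨h, _⟩ | ⟨h, _⟩
    · left; simp only [mem_insert, mem_singleton, Fin.ext_iff]; omega
    · right; simp only [mem_insert, mem_singleton, Fin.ext_iff]; omega
lemma blockJ (Δ j : ℕ) (hj : 2 ≤ j) (hp : Δ = 2*j ∨ Δ + 1 = 2*j) :
    ∃ G : SimpleGraph (Fin (2*j+1)), edgeCount G = Δ*j + Δ/2 ∧
      (∀ v, (G.neighborSet v).ncard ≤ Δ) ∧ (∀ v, ∃ u, G.Adj v u) := by
  rcases hp with hp | hp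
  · refine ⟨⊤, ?_, ?_, ?_⟩
    · classical
      rw [edgeCount_eq, SimpleGraph.card_edgeFinset_top_eq_card_choose_two,
        Fintype.card_fin, Nat.choose_two_right]
      subst hp
      rw [show 2*j+1-1 = 2*j from by omega, show (2*j+1)*(2*j) = 2*(2*j*j+j) from by ring,
        Nat.mul_div_cancel_left _ (by norm_num : 0 < 2)]
      omega
    · intro v
      have := ncard_nbr_le_card (⊤ : SimpleGraph (Fin (2*j+1))) v
      rw [Fintype.card_fin] at this; omega
    · intro v
      by_cases h : v.val = 0
      · refine ⟨⟨1, by omega⟩, ?_⟩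
        rw [SimpleGraph.top_adj]
        intro hh; have : v.val = 1 := Fin.ext_iff.mp hh; omega
      · refine ⟨⟨0, by omega⟩, ?_⟩
        rw [SimpleGraph.top_adj]
        intro hh; have : v.val = 0 := Fin.ext_iff.mp hh; omega
  · set H := SimpleGraph.fromRel
      (fun x y : Fin (2*j+1) => y.val = x.val + 1 ∧ (x.val = 0 ∨ x.val % 2 = 1)) with hHdef
    have Hadj : ∀ x y : Fin (2*j+1), H.Adj x y ↔ x ≠ y ∧
        ((y.val = x.val + 1 ∧ (x.val = 0 ∨ x.val % 2 = 1)) ∨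
         (x.val = y.val + 1 ∧ (y.val = 0 ∨ y.val % 2 = 1))) := by
      intro x y; rw [hHdef, SimpleGraph.fromRel_adj]
    have hcH : edgeCount H = j + 1 := by
      set S : Finset (Fin (2*j+1)) :=
        univ.filter (fun a => a.val = 0 ∨ a.val % 2 = 1) with hSdef
      have hbound : ∀ a : Fin (2*j+1), (a.val = 0 ∨ a.val % 2 = 1) → a.val + 1 < 2*j+1 := by
        intro a ha
        have := a.isLt
        rcases ha with h | h <;> omega
      have hset : H.edgeSet = ↑(S.image (fun a =>
          s(a, (⟨(a.val+1) % (2*j+1), Nat.mod_lt _ (by omega)⟩ : Fin (2*j+1))))) := by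
        ext e
        induction e using Sym2.ind with
        | _ x y =>
          simp only [SimpleGraph.mem_edgeSet, Hadj, coe_image, Set.mem_image, mem_coe,
            hSdef, mem_filter, mem_univ, true_and]
          constructor
          · rintro ⟨hne, ⟨h1, h2⟩ | ⟨h1, h2⟩⟩
            · refine ⟨x, h2, ?_⟩
              have hy : y = (⟨(x.val+1) % (2*j+1), Nat.mod_lt _ (by omega)⟩ : Fin (2*j+1)) := by
                apply Fin.ext
                show y.val = (x.val+1) % (2*j+1)
                rw [Nat.mod_eq_of_lt (hbound x h2)]; omega
              rw [hy]
            · refine ⟨y, h2, ?_⟩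
              have hx : x = (⟨(y.val+1) % (2*j+1), Nat.mod_lt _ (by omega)⟩ : Fin (2*j+1)) := by
                apply Fin.ext
                show x.val = (y.val+1) % (2*j+1)
                rw [Nat.mod_eq_of_lt (hbound y h2)]; omega
              rw [Sym2.eq_swap, hx]
          · rintro ⟨a, ha, heq⟩
            have hlt := hbound a ha
            have hmod : (a.val + 1) % (2*j+1) = a.val + 1 := Nat.mod_eq_of_lt hlt
            rw [Sym2.eq_iff] at heq
            rcases heq with ⟨h1, h2⟩ | ⟨h1, h2⟩
            · have e1 : a.val = x.val := Fin.ext_iff.mp h1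
              have e2 : (a.val+1) % (2*j+1) = y.val := Fin.ext_iff.mp h2
              rw [hmod] at e2
              refine ⟨fun hh => ?_, Or.inl (by omega)⟩
              have := Fin.ext_iff.mp hh; omega
            · have e1 : a.val = y.val := Fin.ext_iff.mp h1
              have e2 : (a.val+1) % (2*j+1) = x.val := Fin.ext_iff.mp h2
              rw [hmod] at e2
              refine ⟨fun hh => ?_, Or.inr (by omega)⟩
              have := Fin.ext_iff.mp hh; omega
      have hinj : Set.InjOn (fun a : Fin (2*j+1) =>
          s(a, (⟨(a.val+1) % (2*j+1), Nat.mod_lt _ (by omega)⟩ : Fin (2*j+1)))) ↑S := by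
        intro a ha b hb heq
        simp only [hSdef, coe_filter, Set.mem_setOf_eq, mem_univ, true_and] at ha hb
        have hla := hbound a ha; have hlb := hbound b hb
        rw [Sym2.eq_iff] at heq
        rcases heq with ⟨h1, _⟩ | ⟨h1, h2⟩
        · exact h1
        · have e1 : a.val = (b.val+1) % (2*j+1) := Fin.ext_iff.mp h1
          have e2 : (a.val+1) % (2*j+1) = b.val := Fin.ext_iff.mp h2
          rw [Nat.mod_eq_of_lt hlb] at e1
          rw [Nat.mod_eq_of_lt hla] at e2
          exact absurd rfl (by omega : a.val ≠ a.val)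
      rw [edgeCount_of_image H S _ hset hinj]
      rw [show j + 1 = (univ : Finset (Fin (j+1))).card from by simp]
      rw [hSdef]
      refine Finset.card_bij' (fun a _ => (⟨(a.val+1)/2, by omega⟩ : Fin (j+1)))
        (fun b _ => (⟨if b.val = 0 then 0 else 2*b.val - 1,
          by have := b.isLt; split_ifs <;> omega⟩ : Fin (2*j+1))) ?_ ?_ ?_ ?_
      case _ => intro a _; exact mem_univ _
      case _ =>
        intro b _
        simp only [mem_filter, mem_univ, true_and]
        show (if b.val = 0 then 0 else 2*b.val - 1) = 0 ∨
          (if b.val = 0 then 0 else 2*b.val - 1) % 2 = 1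
        split_ifs with h0 <;> omega
      case _ =>
        intro a ha
        simp only [mem_filter, mem_univ, true_and] at ha
        apply Fin.ext
        show (if (a.val+1)/2 = 0 then 0 else 2*((a.val+1)/2) - 1) = a.val
        split_ifs with h0 <;> omega
      case _ =>
        intro b _
        apply Fin.ext
        show ((if b.val = 0 then 0 else 2*b.val - 1)+1)/2 = b.val
        split_ifs with h0 <;> omega
    refine ⟨Hᶜ, ?_, ?_, ?_⟩
    · have := edgeCount_add_compl H
      rw [hcH, Fintype.card_fin, Nat.choose_two_right,
        show 2*j+1-1 = 2*j from by omega, show (2*j+1)*(2*j) = 2*(2*j*j+j) from by ring,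
        Nat.mul_div_cancel_left _ (by norm_num : 0 < 2)] at this
      have hΔ2 : Δ/2 = j - 1 := by omega
      have hΔj : Δ*j = 2*j*j - j := by
        have hΔ : Δ = 2*j-1 := by omega
        rw [hΔ]
        have h2 : (2*j-1)*j + j = 2*j*j := by
          have h3 : (2*j-1) + 1 = 2*j := by omega
          calc (2*j-1)*j + j = ((2*j-1)+1)*j := by ring
          _ = 2*j*j := by rw [h3]
        omega
      rw [hΔ2, hΔj]
      have hle : j + 1 ≤ 2*j*j := by nlinarith
      generalize hQ : 2*j*j = Q at this hle ⊢
      omega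
    · intro v
      have hnb : ∃ u : Fin (2*j+1), H.Adj v u := by
        by_cases h0 : v.val = 0
        · refine ⟨⟨1, by omega⟩, (Hadj _ _).mpr ⟨?_, Or.inl ⟨by show (1:ℕ) = v.val+1; omega, Or.inl h0⟩⟩⟩
          intro hh; have : v.val = 1 := Fin.ext_iff.mp hh; omega
        · by_cases h1 : v.val % 2 = 1
          · have hlt : v.val + 1 < 2*j+1 := by have := v.isLt; omega
            refine ⟨⟨v.val+1, hlt⟩, (Hadj _ _).mpr ⟨?_, Or.inl ⟨rfl, Or.inr h1⟩⟩⟩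
            intro hh; have : v.val = v.val + 1 := Fin.ext_iff.mp hh; omega
          · refine ⟨⟨v.val-1, by have := v.isLt; omega⟩,
              (Hadj _ _).mpr ⟨?_, Or.inr ⟨by show v.val = (v.val-1)+1; omega, Or.inr (by show (v.val-1) % 2 = 1; omega)⟩⟩⟩
            intro hh; have : v.val = v.val - 1 := Fin.ext_iff.mp hh; omega
      obtain ⟨u, hu⟩ := hnb
      have := compl_ncard_nbr_le H v {u} (by intro w hw; rw [mem_singleton] at hw; subst hw; exact hu)
      rw [Fintype.card_fin, card_singleton] at this
      omega
    · intro v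
      apply compl_exists_adj H v
        ({(⟨(v.val+1) % (2*j+1), Nat.mod_lt _ (by omega)⟩ : Fin (2*j+1)),
          ⟨v.val - 1, by have := v.isLt; omega⟩} : Finset (Fin (2*j+1)))
      · intro u hu
        rw [Hadj] at hu
        obtain ⟨hne, hrel⟩ := hu
        rcases hrel with ⟨h1, _⟩ | ⟨h1, _⟩
        · have hu1 : u.val < 2*j+1 := u.isLt
          apply mem_insert.mpr; left
          apply Fin.ext
          show u.val = (v.val+1) % (2*j+1)
          rw [Nat.mod_eq_of_lt (by omega)]; omega
        · apply mem_insert.mpr; right; rw [mem_singleton]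
          apply Fin.ext
          show u.val = v.val - 1
          omega
      · have h2 : ({(⟨(v.val+1) % (2*j+1), Nat.mod_lt _ (by omega)⟩ : Fin (2*j+1)),
            ⟨v.val - 1, by have := v.isLt; omega⟩} : Finset (Fin (2*j+1))).card ≤ 2 :=
          (card_insert_le _ _).trans (by rw [card_singleton])
        rw [Fintype.card_fin]
        omega
section BlockX
variable (j : ℕ)

/-- cycle relation on `Fin (2j+3)` -/
def cycRel (x y : Fin (2*j+3)) : Prop := y.val = x.val + 1 ∨ (x.val = 0 ∧ y.val = 2*j+2)

def chordRel (x y : Fin (2*j+3)) : Prop := y.val = x.val + (j+1) ∧ x.val ≤ j+1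

lemma cyc_eq_image (hj : 2 ≤ j) (H : SimpleGraph (Fin (2*j+3)))
    (hH : ∀ x y, H.Adj x y ↔ x ≠ y ∧ (cycRel j x y ∨ cycRel j y x)) :
    H.edgeSet = ↑((univ : Finset (Fin (2*j+3))).image (fun a =>
      s(a, (⟨(a.val+1) % (2*j+3), Nat.mod_lt _ (by omega)⟩ : Fin (2*j+3))))) := by
  ext e
  induction e using Sym2.ind with
  | _ x y =>
    simp only [SimpleGraph.mem_edgeSet, hH, coe_image, Set.mem_image, mem_coe, coe_univ,
      Set.mem_univ, true_and, Set.image_univ, Set.mem_range]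
    constructor
    · rintro ⟨hne, hc | hc⟩ <;> rcases hc with h1 | ⟨h1, h2⟩
      · refine ⟨x, ?_⟩
        have hy : y = (⟨(x.val+1) % (2*j+3), Nat.mod_lt _ (by omega)⟩ : Fin (2*j+3)) := by
          apply Fin.ext
          show y.val = (x.val+1) % (2*j+3)
          rw [Nat.mod_eq_of_lt (by have := y.isLt; omega)]; omega
        rw [hy]
      · refine ⟨y, ?_⟩
        have hx : x = (⟨(y.val+1) % (2*j+3), Nat.mod_lt _ (by omega)⟩ : Fin (2*j+3)) := by
          apply Fin.ext
          show x.val = (y.val+1) % (2*j+3)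
          rw [show y.val + 1 = 2*j+3 from by omega, Nat.mod_self]; omega
        rw [Sym2.eq_swap, hx]
      · refine ⟨y, ?_⟩
        have hx : x = (⟨(y.val+1) % (2*j+3), Nat.mod_lt _ (by omega)⟩ : Fin (2*j+3)) := by
          apply Fin.ext
          show x.val = (y.val+1) % (2*j+3)
          rw [Nat.mod_eq_of_lt (by have := x.isLt; omega)]; omega
        rw [Sym2.eq_swap, hx]
      · refine ⟨x, ?_⟩
        have hy : y = (⟨(x.val+1) % (2*j+3), Nat.mod_lt _ (by omega)⟩ : Fin (2*j+3)) := by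
          apply Fin.ext
          show y.val = (x.val+1) % (2*j+3)
          rw [show x.val + 1 = 2*j+3 from by omega, Nat.mod_self]; omega
        rw [hy]
    · rintro ⟨a, heq⟩
      rw [Sym2.eq_iff] at heq
      by_cases hlt : a.val + 1 < 2*j+3
      · have hmod : (a.val+1) % (2*j+3) = a.val + 1 := Nat.mod_eq_of_lt hlt
        rcases heq with ⟨h1, h2⟩ | ⟨h1, h2⟩
        · have e1 : a.val = x.val := Fin.ext_iff.mp h1
          have e2 : (a.val+1) % (2*j+3) = y.val := Fin.ext_iff.mp h2
          rw [hmod] at e2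
          exact ⟨fun hh => by have := Fin.ext_iff.mp hh; omega,
            Or.inl (Or.inl (by unfold cycRel at *; omega))⟩
        · have e1 : a.val = y.val := Fin.ext_iff.mp h1
          have e2 : (a.val+1) % (2*j+3) = x.val := Fin.ext_iff.mp h2
          rw [hmod] at e2
          exact ⟨fun hh => by have := Fin.ext_iff.mp hh; omega,
            Or.inr (Or.inl (by unfold cycRel at *; omega))⟩
      · have hmod : (a.val+1) % (2*j+3) = 0 := by
          rw [show a.val + 1 = 2*j+3 from by have := a.isLt; omega, Nat.mod_self]
        rcases heq with ⟨h1, h2⟩ | ⟨h1, h2⟩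
        · have e1 : a.val = x.val := Fin.ext_iff.mp h1
          have e2 : (a.val+1) % (2*j+3) = y.val := Fin.ext_iff.mp h2
          rw [hmod] at e2
          have := a.isLt
          exact ⟨fun hh => by have := Fin.ext_iff.mp hh; omega,
            Or.inr (Or.inr ⟨by omega, by omega⟩)⟩
        · have e1 : a.val = y.val := Fin.ext_iff.mp h1
          have e2 : (a.val+1) % (2*j+3) = x.val := Fin.ext_iff.mp h2
          rw [hmod] at e2
          have := a.isLt
          exact ⟨fun hh => by have := Fin.ext_iff.mp hh; omega,
            Or.inl (Or.inr ⟨by omega, by omega⟩)⟩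

lemma cyc_inj (hj : 2 ≤ j) : Set.InjOn (fun a : Fin (2*j+3) =>
    s(a, (⟨(a.val+1) % (2*j+3), Nat.mod_lt _ (by omega)⟩ : Fin (2*j+3))))
    ↑(univ : Finset (Fin (2*j+3))) := by
  intro a _ b _ heq
  rw [Sym2.eq_iff] at heq
  rcases heq with ⟨h1, _⟩ | ⟨h1, h2⟩
  · exact h1
  · have e1 : a.val = (b.val+1) % (2*j+3) := Fin.ext_iff.mp h1
    have e2 : (a.val+1) % (2*j+3) = b.val := Fin.ext_iff.mp h2
    have ha := a.isLt; have hb := b.isLt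
    apply Fin.ext
    by_cases h1' : a.val + 1 < 2*j+3 <;> by_cases h2' : b.val + 1 < 2*j+3
    · rw [Nat.mod_eq_of_lt h1'] at e2; rw [Nat.mod_eq_of_lt h2'] at e1; omega
    · rw [Nat.mod_eq_of_lt h1'] at e2
      rw [show b.val + 1 = 2*j+3 from by omega, Nat.mod_self] at e1
      omega
    · rw [show a.val + 1 = 2*j+3 from by omega, Nat.mod_self] at e2
      rw [Nat.mod_eq_of_lt h2'] at e1
      omega
    · omega

lemma blockX_even (hj : 2 ≤ j) :
    ∃ G : SimpleGraph (Fin (2*j+3)), edgeCount G = (2*j)*(j+1) + j ∧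
      (∀ v, (G.neighborSet v).ncard ≤ 2*j) ∧ (∀ v, ∃ u, G.Adj v u) := by
  set H := SimpleGraph.fromRel (cycRel j) with hHdef
  have Hadj : ∀ x y, H.Adj x y ↔ x ≠ y ∧ (cycRel j x y ∨ cycRel j y x) := by
    intro x y; rw [hHdef, SimpleGraph.fromRel_adj]
  have hcH : edgeCount H = 2*j+3 := by
    rw [edgeCount_of_image H univ _ (cyc_eq_image j hj H Hadj) (cyc_inj j hj)]
    simp
  refine ⟨Hᶜ, ?_, ?_, ?_⟩
  · have hsum := edgeCount_add_compl H
    rw [hcH, Fintype.card_fin, Nat.choose_two_right,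
      show 2*j+3-1 = 2*(j+1) from by omega,
      show (2*j+3)*(2*(j+1)) = 2*((2*j+3)*(j+1)) from by ring,
      Nat.mul_div_cancel_left _ (by norm_num : 0 < 2)] at hsum
    have hA : (2*j)*(j+1) + j + (2*j+3) = (2*j+3)*(j+1) := by ring
    generalize hB : (2*j+3)*(j+1) = B at hsum hA
    generalize hA2 : (2*j)*(j+1) = A at hA ⊢
    omega
  · intro v
    have hv := v.isLt
    have hnb : ∃ s : Finset (Fin (2*j+3)), s.card = 2 ∧ ∀ u ∈ s, H.Adj v u := by
      by_cases h0 : v.val = 0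
      · refine ⟨{⟨1, by omega⟩, ⟨2*j+2, by omega⟩}, ?_, ?_⟩
        · rw [card_insert_of_notMem (by
            intro hmem; rw [mem_singleton] at hmem
            simp only [Fin.mk.injEq] at hmem; omega), card_singleton]
        · intro u hu
          rw [mem_insert, mem_singleton] at hu
          rcases hu with rfl | rfl
          · rw [Hadj]
            refine ⟨?_, Or.inl (Or.inl ?_)⟩
            · intro hh; have : v.val = 1 := Fin.ext_iff.mp hh; omega
            · show (1:ℕ) = v.val + 1; omega
          · rw [Hadj]
            refine ⟨?_, Or.inl (Or.inr ⟨h0, rfl⟩)⟩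
            intro hh; have : v.val = 2*j+2 := Fin.ext_iff.mp hh; omega
      · by_cases hn : v.val = 2*j+2
        · refine ⟨{⟨0, by omega⟩, ⟨2*j+1, by omega⟩}, ?_, ?_⟩
          · rw [card_insert_of_notMem (by
              intro hmem; rw [mem_singleton] at hmem
              simp only [Fin.mk.injEq] at hmem; omega), card_singleton]
          · intro u hu
            rw [mem_insert, mem_singleton] at hu
            rcases hu with rfl | rfl
            · rw [Hadj]
              refine ⟨?_, Or.inr (Or.inr ⟨rfl, hn⟩)⟩
              intro hh; have : v.val = 0 := Fin.ext_iff.mp hh; omega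
            · rw [Hadj]
              refine ⟨?_, Or.inr (Or.inl ?_)⟩
              · intro hh; have : v.val = 2*j+1 := Fin.ext_iff.mp hh; omega
              · show v.val = (2*j+1) + 1; omega
        · refine ⟨{⟨v.val+1, by omega⟩, ⟨v.val-1, by omega⟩}, ?_, ?_⟩
          · rw [card_insert_of_notMem (by
              intro hmem; rw [mem_singleton] at hmem
              simp only [Fin.mk.injEq] at hmem; omega), card_singleton]
          · intro u hu
            rw [mem_insert, mem_singleton] at hu
            rcases hu with rfl | rfl
            · rw [Hadj]
              refine ⟨?_, Or.inl (Or.inl ?_)⟩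
              · intro hh; have : v.val = v.val+1 := Fin.ext_iff.mp hh; omega
              · show (v.val+1 : ℕ) = v.val + 1; rfl
            · rw [Hadj]
              refine ⟨?_, Or.inr (Or.inl ?_)⟩
              · intro hh; have : v.val = v.val-1 := Fin.ext_iff.mp hh; omega
              · show v.val = (v.val-1) + 1; omega
    obtain ⟨s, hsc, hsadj⟩ := hnb
    have := compl_ncard_nbr_le H v s hsadj
    rw [Fintype.card_fin, hsc] at this
    omega
  · intro v
    have hv := v.isLt
    apply compl_exists_adj H v
      ({(⟨(v.val+1) % (2*j+3), Nat.mod_lt _ (by omega)⟩ : Fin (2*j+3)),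
        ⟨v.val - 1, by omega⟩, ⟨2*j+2, by omega⟩, ⟨0, by omega⟩} : Finset (Fin (2*j+3)))
    · intro u hu
      rw [Hadj] at hu
      obtain ⟨hne, hrel⟩ := hu
      have hu1 := u.isLt
      simp only [mem_insert, mem_singleton]
      unfold cycRel at hrel
      rcases hrel with (h1 | ⟨h1, h2⟩) | (h1 | ⟨h1, h2⟩)
      · left
        apply Fin.ext
        show u.val = (v.val+1) % (2*j+3)
        rw [Nat.mod_eq_of_lt (by omega)]; omega
      · right; right; left
        apply Fin.ext
        show u.val = 2*j+2; omega
      · right; left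
        apply Fin.ext
        show u.val = v.val - 1; omega
      · right; right; right
        apply Fin.ext
        show u.val = 0; omega
    · have hc4 : ({(⟨(v.val+1) % (2*j+3), Nat.mod_lt _ (by omega)⟩ : Fin (2*j+3)),
          ⟨v.val - 1, by omega⟩, ⟨2*j+2, by omega⟩, ⟨0, by omega⟩} : Finset (Fin (2*j+3))).card ≤ 4 := by
        apply le_trans (card_insert_le _ _)
        have := card_insert_le (⟨v.val - 1, by omega⟩ : Fin (2*j+3)) ({⟨2*j+2, by omega⟩, ⟨0, by omega⟩} : Finset (Fin (2*j+3)))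
        have h2 : ({(⟨2*j+2, by omega⟩ : Fin (2*j+3)), ⟨0, by omega⟩} : Finset (Fin (2*j+3))).card ≤ 2 :=
          card_insert_le _ _ |>.trans (by rw [card_singleton])
        omega
      rw [Fintype.card_fin]
      omega
lemma blockX_odd (hj : 2 ≤ j) :
    ∃ G : SimpleGraph (Fin (2*j+3)), edgeCount G = (2*j-1)*(j+1) + (j-1) ∧
      (∀ v, (G.neighborSet v).ncard ≤ 2*j-1) ∧ (∀ v, ∃ u, G.Adj v u) := by
  set H := SimpleGraph.fromRel (fun x y => cycRel j x y ∨ chordRel j x y) with hHdef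
  have Hadj : ∀ x y, H.Adj x y ↔ x ≠ y ∧
      ((cycRel j x y ∨ chordRel j x y) ∨ (cycRel j y x ∨ chordRel j y x)) := by
    intro x y; rw [hHdef, SimpleGraph.fromRel_adj]
  set f : Fin (2*j+3) → Sym2 (Fin (2*j+3)) := fun a =>
    s(a, (⟨(a.val+1) % (2*j+3), Nat.mod_lt _ (by omega)⟩ : Fin (2*j+3))) with hfdef
  set g : Fin (2*j+3) → Sym2 (Fin (2*j+3)) := fun a =>
    s(a, (⟨(a.val+(j+1)) % (2*j+3), Nat.mod_lt _ (by omega)⟩ : Fin (2*j+3))) with hgdef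
  set T : Finset (Fin (2*j+3)) := univ.filter (fun a => a.val ≤ j+1) with hTdef
  have hgmod : ∀ a : Fin (2*j+3), a.val ≤ j+1 → (a.val+(j+1)) % (2*j+3) = a.val+(j+1) :=
    fun a ha => Nat.mod_eq_of_lt (by omega)
  have hcH : edgeCount H = 3*j+5 := by
    have hset : H.edgeSet = ↑((univ.image f) ∪ (T.image g)) := by
      ext e
      induction e using Sym2.ind with
      | _ x y =>
        have hx := x.isLt; have hy := y.isLt
        simp only [SimpleGraph.mem_edgeSet, Hadj, coe_union, Set.mem_union, coe_image,
          mem_coe, Set.mem_image, coe_univ, Set.image_univ, Set.mem_range, hTdef,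
          mem_filter, mem_univ, true_and]
        constructor
        · rintro ⟨hne, (hc | hc) | (hc | hc)⟩
          · left
            rcases hc with h1 | ⟨h1, h2⟩
            · refine ⟨x, ?_⟩
              have hyy : y = (⟨(x.val+1) % (2*j+3), Nat.mod_lt _ (by omega)⟩ : Fin (2*j+3)) := by
                apply Fin.ext
                show y.val = (x.val+1) % (2*j+3)
                rw [Nat.mod_eq_of_lt (by omega)]; omega
              rw [hfdef]; rw [hyy]
            · refine ⟨y, ?_⟩
              have hxx : x = (⟨(y.val+1) % (2*j+3), Nat.mod_lt _ (by omega)⟩ : Fin (2*j+3)) := by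
                apply Fin.ext
                show x.val = (y.val+1) % (2*j+3)
                rw [show y.val + 1 = 2*j+3 from by omega, Nat.mod_self]; omega
              rw [hfdef, Sym2.eq_swap]; rw [hxx]
          · right
            obtain ⟨h1, h2⟩ := hc
            refine ⟨x, h2, ?_⟩
            have hyy : y = (⟨(x.val+(j+1)) % (2*j+3), Nat.mod_lt _ (by omega)⟩ : Fin (2*j+3)) := by
              apply Fin.ext
              show y.val = (x.val+(j+1)) % (2*j+3)
              rw [hgmod x h2]; omega
            rw [hgdef]; rw [hyy]
          · left
            rcases hc with h1 | ⟨h1, h2⟩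
            · refine ⟨y, ?_⟩
              have hxx : x = (⟨(y.val+1) % (2*j+3), Nat.mod_lt _ (by omega)⟩ : Fin (2*j+3)) := by
                apply Fin.ext
                show x.val = (y.val+1) % (2*j+3)
                rw [Nat.mod_eq_of_lt (by omega)]; omega
              rw [hfdef, Sym2.eq_swap]; rw [hxx]
            · refine ⟨x, ?_⟩
              have hyy : y = (⟨(x.val+1) % (2*j+3), Nat.mod_lt _ (by omega)⟩ : Fin (2*j+3)) := by
                apply Fin.ext
                show y.val = (x.val+1) % (2*j+3)
                rw [show x.val + 1 = 2*j+3 from by omega, Nat.mod_self]; omega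
              rw [hfdef]; rw [hyy]
          · right
            obtain ⟨h1, h2⟩ := hc
            refine ⟨y, h2, ?_⟩
            have hxx : x = (⟨(y.val+(j+1)) % (2*j+3), Nat.mod_lt _ (by omega)⟩ : Fin (2*j+3)) := by
              apply Fin.ext
              show x.val = (y.val+(j+1)) % (2*j+3)
              rw [hgmod y h2]; omega
            rw [hgdef, Sym2.eq_swap]; rw [hxx]
        · rintro (⟨a, heq⟩ | ⟨a, ha, heq⟩)
          · rw [hfdef, Sym2.eq_iff] at heq
            have hav := a.isLt
            by_cases hlt : a.val + 1 < 2*j+3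
            · have hmod : (a.val+1) % (2*j+3) = a.val + 1 := Nat.mod_eq_of_lt hlt
              rcases heq with ⟨h1, h2⟩ | ⟨h1, h2⟩
              · have e1 : a.val = x.val := Fin.ext_iff.mp h1
                have e2 : (a.val+1) % (2*j+3) = y.val := Fin.ext_iff.mp h2
                rw [hmod] at e2
                exact ⟨fun hh => by have := Fin.ext_iff.mp hh; omega,
                  Or.inl (Or.inl (Or.inl (by omega)))⟩
              · have e1 : a.val = y.val := Fin.ext_iff.mp h1
                have e2 : (a.val+1) % (2*j+3) = x.val := Fin.ext_iff.mp h2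
                rw [hmod] at e2
                exact ⟨fun hh => by have := Fin.ext_iff.mp hh; omega,
                  Or.inr (Or.inl (Or.inl (by omega)))⟩
            · have hmod : (a.val+1) % (2*j+3) = 0 := by
                rw [show a.val + 1 = 2*j+3 from by omega, Nat.mod_self]
              rcases heq with ⟨h1, h2⟩ | ⟨h1, h2⟩
              · have e1 : a.val = x.val := Fin.ext_iff.mp h1
                have e2 : (a.val+1) % (2*j+3) = y.val := Fin.ext_iff.mp h2
                rw [hmod] at e2
                exact ⟨fun hh => by have := Fin.ext_iff.mp hh; omega,
                  Or.inr (Or.inl (Or.inr ⟨by omega, by omega⟩))⟩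
              · have e1 : a.val = y.val := Fin.ext_iff.mp h1
                have e2 : (a.val+1) % (2*j+3) = x.val := Fin.ext_iff.mp h2
                rw [hmod] at e2
                exact ⟨fun hh => by have := Fin.ext_iff.mp hh; omega,
                  Or.inl (Or.inl (Or.inr ⟨by omega, by omega⟩))⟩
          · rw [hgdef, Sym2.eq_iff] at heq
            have hmod := hgmod a ha
            rcases heq with ⟨h1, h2⟩ | ⟨h1, h2⟩
            · have e1 : a.val = x.val := Fin.ext_iff.mp h1
              have e2 : (a.val+(j+1)) % (2*j+3) = y.val := Fin.ext_iff.mp h2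
              rw [hmod] at e2
              exact ⟨fun hh => by have := Fin.ext_iff.mp hh; omega,
                Or.inl (Or.inr ⟨by omega, by omega⟩)⟩
            · have e1 : a.val = y.val := Fin.ext_iff.mp h1
              have e2 : (a.val+(j+1)) % (2*j+3) = x.val := Fin.ext_iff.mp h2
              rw [hmod] at e2
              exact ⟨fun hh => by have := Fin.ext_iff.mp hh; omega,
                Or.inr (Or.inr ⟨by omega, by omega⟩)⟩
    rw [edgeCount, hset, Set.ncard_coe_finset]
    have hinjf : Set.InjOn f ↑(univ : Finset (Fin (2*j+3))) := by
      intro a _ b _ heq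
      rw [hfdef, Sym2.eq_iff] at heq
      rcases heq with ⟨h1, _⟩ | ⟨h1, h2⟩
      · exact h1
      · have e1 : a.val = (b.val+1) % (2*j+3) := Fin.ext_iff.mp h1
        have e2 : (a.val+1) % (2*j+3) = b.val := Fin.ext_iff.mp h2
        have ha := a.isLt; have hb := b.isLt
        apply Fin.ext
        by_cases h1' : a.val + 1 < 2*j+3 <;> by_cases h2' : b.val + 1 < 2*j+3
        · rw [Nat.mod_eq_of_lt h1'] at e2; rw [Nat.mod_eq_of_lt h2'] at e1; omega
        · rw [Nat.mod_eq_of_lt h1'] at e2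
          rw [show b.val + 1 = 2*j+3 from by omega, Nat.mod_self] at e1; omega
        · rw [show a.val + 1 = 2*j+3 from by omega, Nat.mod_self] at e2
          rw [Nat.mod_eq_of_lt h2'] at e1; omega
        · omega
    have hinjg : Set.InjOn g ↑T := by
      intro a ha b hb heq
      simp only [hTdef, coe_filter, Set.mem_setOf_eq, mem_univ, true_and] at ha hb
      rw [hgdef, Sym2.eq_iff] at heq
      rcases heq with ⟨h1, _⟩ | ⟨h1, h2⟩
      · exact h1
      · have e1 : a.val = (b.val+(j+1)) % (2*j+3) := Fin.ext_iff.mp h1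
        have e2 : (a.val+(j+1)) % (2*j+3) = b.val := Fin.ext_iff.mp h2
        rw [hgmod b hb] at e1; rw [hgmod a ha] at e2
        apply Fin.ext; omega
    have hdisj : Disjoint (univ.image f) (T.image g) := by
      rw [disjoint_left]
      rintro e he he'
      simp only [mem_image, mem_univ, true_and, hTdef, mem_filter] at he he'
      obtain ⟨a, rfl⟩ := he
      obtain ⟨b, hb, heq⟩ := he'
      rw [hgdef, hfdef, Sym2.eq_iff] at heq
      have ha := a.isLt
      have hmodb := hgmod b hb
      rcases heq with ⟨h1, h2⟩ | ⟨h1, h2⟩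
      · have e1 : b.val = a.val := Fin.ext_iff.mp h1
        have e2 : (b.val+(j+1)) % (2*j+3) = (a.val+1) % (2*j+3) := Fin.ext_iff.mp h2
        rw [hmodb] at e2
        by_cases hlt : a.val + 1 < 2*j+3
        · rw [Nat.mod_eq_of_lt hlt] at e2; omega
        · rw [show a.val + 1 = 2*j+3 from by omega, Nat.mod_self] at e2; omega
      · have e1 : b.val = (a.val+1) % (2*j+3) := Fin.ext_iff.mp h1
        have e2 : (b.val+(j+1)) % (2*j+3) = a.val := Fin.ext_iff.mp h2
        rw [hmodb] at e2
        by_cases hlt : a.val + 1 < 2*j+3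
        · rw [Nat.mod_eq_of_lt hlt] at e1; omega
        · rw [show a.val + 1 = 2*j+3 from by omega, Nat.mod_self] at e1; omega
    rw [card_union_of_disjoint hdisj, card_image_of_injOn hinjf, card_image_of_injOn hinjg]
    have hT : T.card = j+2 := by
      rw [hTdef]
      rw [show j + 2 = (univ : Finset (Fin (j+2))).card from by simp]
      refine Finset.card_bij' (fun a ha => (⟨a.val, by
          simp only [mem_filter] at ha; omega⟩ : Fin (j+2)))
        (fun b _ => (⟨b.val, by have := b.isLt; omega⟩ : Fin (2*j+3))) ?_ ?_ ?_ ?_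
      · intro a _; exact mem_univ _
      · intro b _
        simp only [mem_filter, mem_univ, true_and]
        show b.val ≤ j+1
        have := b.isLt; omega
      · intro a _; apply Fin.ext; rfl
      · intro b _; apply Fin.ext; rfl
    rw [hT, card_univ, Fintype.card_fin]
    omega
  refine ⟨Hᶜ, ?_, ?_, ?_⟩
  · have hsum := edgeCount_add_compl H
    rw [hcH, Fintype.card_fin, Nat.choose_two_right,
      show 2*j+3-1 = 2*(j+1) from by omega,
      show (2*j+3)*(2*(j+1)) = 2*((2*j+3)*(j+1)) from by ring,
      Nat.mul_div_cancel_left _ (by norm_num : 0 < 2)] at hsum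
    have hA : (2*j-1)*(j+1) + (4*(j+1)) = (2*j+3)*(j+1) := by
      have h4 : (2*j-1) + 4 = 2*j+3 := by omega
      calc (2*j-1)*(j+1) + 4*(j+1) = ((2*j-1)+4)*(j+1) := by ring
      _ = (2*j+3)*(j+1) := by rw [h4]
    generalize hB : (2*j+3)*(j+1) = B at hsum hA
    generalize hA2 : (2*j-1)*(j+1) = A at hA ⊢
    omega
  · intro v
    have hv := v.isLt
    have hnb : ∃ s : Finset (Fin (2*j+3)), s.card = 3 ∧ ∀ u ∈ s, H.Adj v u := by
      have hchord : ∃ w : Fin (2*j+3), (w.val = v.val + (j+1) ∨ w.val + (j+1) = v.val) ∧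
          H.Adj v w := by
        by_cases hc : v.val ≤ j+1
        · refine ⟨⟨v.val + (j+1), by omega⟩, Or.inl rfl, (Hadj _ _).mpr ⟨?_, Or.inl (Or.inr ⟨rfl, hc⟩)⟩⟩
          intro hh; have : v.val = v.val + (j+1) := Fin.ext_iff.mp hh; omega
        · refine ⟨⟨v.val - (j+1), by omega⟩, Or.inr (by show (v.val - (j+1)) + (j+1) = v.val; omega),
            (Hadj _ _).mpr ⟨?_, Or.inr (Or.inr ⟨by show v.val = (v.val - (j+1)) + (j+1); omega,
              by show v.val - (j+1) ≤ j+1; omega⟩)⟩⟩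
          intro hh; have : v.val = v.val - (j+1) := Fin.ext_iff.mp hh; omega
      obtain ⟨w, hwv, hwadj⟩ := hchord
      have hcyc : ∃ u1 u2 : Fin (2*j+3), u1 ≠ u2 ∧
          (u1.val = v.val + 1 ∨ u1.val + 1 = v.val ∨ (v.val = 0 ∧ u1.val = 2*j+2) ∨ (u1.val = 0 ∧ v.val = 2*j+2)) ∧
          (u2.val = v.val + 1 ∨ u2.val + 1 = v.val ∨ (v.val = 0 ∧ u2.val = 2*j+2) ∨ (u2.val = 0 ∧ v.val = 2*j+2)) ∧
          H.Adj v u1 ∧ H.Adj v u2 := by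
        by_cases h0 : v.val = 0
        · refine ⟨⟨1, by omega⟩, ⟨2*j+2, by omega⟩, ?_, Or.inl (by show (1:ℕ) = v.val + 1; omega), Or.inr (Or.inr (Or.inl ⟨h0, by show (2*j+2:ℕ) = 2*j+2; rfl⟩)), ?_, ?_⟩
          · intro hh; simp only [Fin.mk.injEq] at hh; omega
          · exact (Hadj _ _).mpr ⟨fun hh => by have : v.val = 1 := Fin.ext_iff.mp hh; omega,
              Or.inl (Or.inl (Or.inl (by show (1:ℕ) = v.val + 1; omega)))⟩
          · exact (Hadj _ _).mpr ⟨fun hh => by have : v.val = 2*j+2 := Fin.ext_iff.mp hh; omega,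
              Or.inl (Or.inl (Or.inr ⟨h0, by show (2*j+2:ℕ) = 2*j+2; rfl⟩))⟩
        · by_cases hn : v.val = 2*j+2
          · refine ⟨⟨0, by omega⟩, ⟨2*j+1, by omega⟩, ?_, Or.inr (Or.inr (Or.inr ⟨by show (0:ℕ) = 0; rfl, hn⟩)), Or.inr (Or.inl (by show (2*j+1:ℕ)+1 = v.val; omega)), ?_, ?_⟩
            · intro hh; simp only [Fin.mk.injEq] at hh; omega
            · exact (Hadj _ _).mpr ⟨fun hh => by have : v.val = 0 := Fin.ext_iff.mp hh; omega,
                Or.inr (Or.inl (Or.inr ⟨by show (0:ℕ) = 0; rfl, hn⟩))⟩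
            · exact (Hadj _ _).mpr ⟨fun hh => by have : v.val = 2*j+1 := Fin.ext_iff.mp hh; omega,
                Or.inr (Or.inl (Or.inl (by show v.val = 2*j+1+1; omega)))⟩
          · refine ⟨⟨v.val+1, by omega⟩, ⟨v.val-1, by omega⟩, ?_, Or.inl (by show v.val+1 = v.val+1; rfl), Or.inr (Or.inl (by show (v.val-1)+1 = v.val; omega)), ?_, ?_⟩
            · intro hh; simp only [Fin.mk.injEq] at hh; omega
            · exact (Hadj _ _).mpr ⟨fun hh => by have : v.val = v.val+1 := Fin.ext_iff.mp hh; omega,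
                Or.inl (Or.inl (Or.inl (by show (v.val+1:ℕ) = v.val + 1; rfl)))⟩
            · exact (Hadj _ _).mpr ⟨fun hh => by have : v.val = v.val-1 := Fin.ext_iff.mp hh; omega,
                Or.inr (Or.inl (Or.inl (by show v.val = (v.val-1)+1; omega)))⟩
      obtain ⟨u1, u2, hne12, hu1c, hu2c, ha1, ha2⟩ := hcyc
      refine ⟨{u1, u2, w}, ?_, ?_⟩
      · have hwu1 : w ≠ u1 := by
          intro hh; rw [hh] at hwv
          rcases hwv with h | h <;> rcases hu1c with h' | h' | ⟨h', h''⟩ | ⟨h', h''⟩ <;> omega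
        have hwu2 : w ≠ u2 := by
          intro hh; rw [hh] at hwv
          rcases hwv with h | h <;> rcases hu2c with h' | h' | ⟨h', h''⟩ | ⟨h', h''⟩ <;> omega
        rw [card_insert_of_notMem (by
            rw [mem_insert, mem_singleton]
            rintro (hh | hh)
            exacts [hne12 hh, hwu1 hh.symm]),
          card_insert_of_notMem (by rw [mem_singleton]; intro hh; exact hwu2 hh.symm),
          card_singleton]
      · intro u hu
        rw [mem_insert, mem_insert, mem_singleton] at hu
        rcases hu with rfl | rfl | rfl
        exacts [ha1, ha2, hwadj]
    obtain ⟨s, hsc, hsadj⟩ := hnb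
    have := compl_ncard_nbr_le H v s hsadj
    rw [Fintype.card_fin, hsc] at this
    omega
  · intro v
    have hv := v.isLt
    set cap : Finset (Fin (2*j+3)) :=
      {(⟨(v.val+1) % (2*j+3), Nat.mod_lt _ (by omega)⟩ : Fin (2*j+3)),
        ⟨v.val - 1, by omega⟩,
        ⟨(v.val+(j+1)) % (2*j+3), Nat.mod_lt _ (by omega)⟩,
        ⟨v.val - (j+1), by omega⟩,
        (if v.val = 0 then (⟨2*j+2, by omega⟩ : Fin (2*j+3)) else ⟨0, by omega⟩)} with hcap
    apply compl_exists_adj H v cap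
    · intro u hu
      rw [Hadj] at hu
      obtain ⟨hne, hrel⟩ := hu
      have hu1 := u.isLt
      rw [hcap]
      simp only [mem_insert, mem_singleton]
      unfold cycRel chordRel at hrel
      rcases hrel with ((h1 | ⟨h1, h2⟩) | ⟨h1, h2⟩) | ((h1 | ⟨h1, h2⟩) | ⟨h1, h2⟩)
      · left; apply Fin.ext
        show u.val = (v.val+1) % (2*j+3)
        rw [Nat.mod_eq_of_lt (by omega)]; omega
      · right; right; right; right
        rw [if_pos h1]; apply Fin.ext; show u.val = 2*j+2; omega
      · right; right; left; apply Fin.ext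
        show u.val = (v.val+(j+1)) % (2*j+3)
        rw [hgmod v h2]; omega
      · right; left; apply Fin.ext
        show u.val = v.val - 1; omega
      · right; right; right; right
        rw [if_neg (by omega)]; apply Fin.ext; show u.val = 0; omega
      · right; right; right; left; apply Fin.ext
        show u.val = v.val - (j+1); omega
    · have hle : cap.card ≤ 5 := by
        rw [hcap]
        apply le_trans (card_insert_le _ _)
        have h1 := card_insert_le (⟨v.val - 1, by omega⟩ : Fin (2*j+3))
          ({⟨(v.val+(j+1)) % (2*j+3), Nat.mod_lt _ (by omega)⟩,
            ⟨v.val - (j+1), by omega⟩,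
            (if v.val = 0 then (⟨2*j+2, by omega⟩ : Fin (2*j+3)) else ⟨0, by omega⟩)} : Finset (Fin (2*j+3)))
        have h2 := card_insert_le (⟨(v.val+(j+1)) % (2*j+3), Nat.mod_lt _ (by omega)⟩ : Fin (2*j+3))
          ({⟨v.val - (j+1), by omega⟩,
            (if v.val = 0 then (⟨2*j+2, by omega⟩ : Fin (2*j+3)) else ⟨0, by omega⟩)} : Finset (Fin (2*j+3)))
        have h3 := card_insert_le (⟨v.val - (j+1), by omega⟩ : Fin (2*j+3))
          ({(if v.val = 0 then (⟨2*j+2, by omega⟩ : Fin (2*j+3)) else ⟨0, by omega⟩)} : Finset (Fin (2*j+3)))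
        have h4 : ({(if v.val = 0 then (⟨2*j+2, by omega⟩ : Fin (2*j+3)) else ⟨0, by omega⟩)} : Finset (Fin (2*j+3))).card = 1 := card_singleton _
        omega
      rw [Fintype.card_fin]
      omega
end BlockX
lemma blockX' (Δ j : ℕ) (hj : 2 ≤ j) (hp : Δ = 2*j ∨ Δ + 1 = 2*j) :
    ∃ G : SimpleGraph (Fin (2*j+3)), edgeCount G = Δ*(j+1) + Δ/2 ∧
      (∀ v, (G.neighborSet v).ncard ≤ Δ) ∧ (∀ v, ∃ u, G.Adj v u) := by
  rcases hp with hp | hp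
  · obtain ⟨G, h1, h2, h3⟩ := blockX_even j hj
    refine ⟨G, ?_, ?_, h3⟩
    · rw [h1, hp, show (2*j)/2 = j from by omega]
    · intro v; rw [hp]; exact h2 v
  · obtain ⟨G, h1, h2, h3⟩ := blockX_odd j hj
    have hΔ : Δ = 2*j-1 := by omega
    refine ⟨G, ?_, ?_, h3⟩
    · rw [h1, hΔ, show (2*j-1)/2 = j-1 from by omega]
    · intro v; rw [hΔ]; exact h2 v

lemma MB_fin {n : ℕ} (G : SimpleGraph (Fin n)) : MB G (n/2) := by
  have := MB_card G; rwa [Fintype.card_fin] at this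

lemma MB_star (Δ : ℕ) (hΔ : 3 ≤ Δ) : MB (star Δ) 1 := by
  obtain ⟨-, -, -, hcov⟩ := star_spec Δ hΔ
  have := MB_cover ({⟨0, by omega⟩} : Finset (Fin (Δ+1))) (fun x y h => by
    rcases hcov x y h with h | h
    · exact Or.inl (by simp [h])
    · exact Or.inr (by simp [h]))
  simpa using this

lemma MB_k2d (Δ : ℕ) (hΔ : 3 ≤ Δ) : MB (k2d Δ) 2 := by
  obtain ⟨-, -, -, hcov⟩ := k2d_spec Δ hΔ
  have := MB_cover ({⟨0, by omega⟩, ⟨1, by omega⟩} : Finset (Fin (Δ+2)))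
    (fun x y h => hcov x y h)
  have hc : ({(⟨0, by omega⟩ : Fin (Δ+2)), ⟨1, by omega⟩} : Finset (Fin (Δ+2))).card = 2 := by
    rw [card_insert_of_notMem (by simp [Fin.ext_iff]), card_singleton]
  rwa [hc] at this

/-- Assemble three multi-component parts into a single graph on `Fin N`. -/
lemma build {n1 n2 n3 : ℕ} (k1 k2 k3 b1 b2 b3 e1 e2 e3 d : ℕ)
    (P1 : SimpleGraph (Fin n1)) (P2 : SimpleGraph (Fin n2)) (P3 : SimpleGraph (Fin n3))
    (hb1 : MB P1 b1) (hb2 : MB P2 b2) (hb3 : MB P3 b3)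
    (he1 : edgeCount P1 = e1) (he2 : edgeCount P2 = e2) (he3 : edgeCount P3 = e3)
    (hd1 : ∀ v, (P1.neighborSet v).ncard ≤ d) (hd2 : ∀ v, (P2.neighborSet v).ncard ≤ d)
    (hd3 : ∀ v, (P3.neighborSet v).ncard ≤ d)
    (hi1 : ∀ v, ∃ u, P1.Adj v u) (hi2 : ∀ v, ∃ u, P2.Adj v u) (hi3 : ∀ v, ∃ u, P3.Adj v u) :
    ∃ (G₂ : SimpleGraph (Fin (k1*n1 + (k2*n2 + k3*n3)))),
      (∀ v, ∃ u, G₂.Adj v u) ∧ maxDeg G₂ ≤ d ∧ matNum G₂ ≤ k1*b1 + (k2*b2 + k3*b3) ∧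
      edgeCount G₂ = k1*e1 + (k2*e2 + k3*e3) := by
  set G : SimpleGraph ((Fin k1 × Fin n1) ⊕ ((Fin k2 × Fin n2) ⊕ (Fin k3 × Fin n3))) :=
    sumG (unionN k1 n1 P1) (sumG (unionN k2 n2 P2) (unionN k3 n3 P3)) with hGdef
  have hMB : MB G (k1*b1 + (k2*b2 + k3*b3)) :=
    MB_sum (MB_unionN hb1) (MB_sum (MB_unionN hb2) (MB_unionN hb3))
  have hdeg : ∀ v, (G.neighborSet v).ncard ≤ d := by
    rintro (⟨a, x⟩ | (⟨a, x⟩ | ⟨a, x⟩))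
    · rw [hGdef, ncard_nbr_sumG_inl, ncard_nbr_unionN]; exact hd1 x
    · rw [hGdef, ncard_nbr_sumG_inr, ncard_nbr_sumG_inl, ncard_nbr_unionN]; exact hd2 x
    · rw [hGdef, ncard_nbr_sumG_inr, ncard_nbr_sumG_inr, ncard_nbr_unionN]; exact hd3 x
  have hisol : ∀ v, ∃ u, G.Adj v u := by
    rintro (⟨a, x⟩ | (⟨a, x⟩ | ⟨a, x⟩))
    · obtain ⟨u, hu⟩ := hi1 x
      exact ⟨Sum.inl (a, u), sumG_adj_ll.mpr ⟨rfl, hu⟩⟩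
    · obtain ⟨u, hu⟩ := hi2 x
      exact ⟨Sum.inr (Sum.inl (a, u)), sumG_adj_rr.mpr (sumG_adj_ll.mpr ⟨rfl, hu⟩)⟩
    · obtain ⟨u, hu⟩ := hi3 x
      exact ⟨Sum.inr (Sum.inr (a, u)), sumG_adj_rr.mpr (sumG_adj_rr.mpr ⟨rfl, hu⟩)⟩
  have hE : edgeCount G = k1*e1 + (k2*e2 + k3*e3) := by
    rw [hGdef, edgeCount_sumG, edgeCount_sumG, edgeCount_unionN, edgeCount_unionN,
      edgeCount_unionN, he1, he2, he3]
  have hcard : Fintype.card ((Fin k1 × Fin n1) ⊕ ((Fin k2 × Fin n2) ⊕ (Fin k3 × Fin n3)))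
      = k1*n1 + (k2*n2 + k3*n3) := by simp
  rw [← hcard]
  exact transport G (k1*b1 + (k2*b2 + k3*b3)) d
    (k1*e1 + (k2*e2 + k3*e3)) hMB hdeg hisol hE

end Aux

/-- If `Δ, ν ≥ 2`, `⌈Δ/2⌉ ∤ ν`, and `G₁` is an extremal graph (no isolated
vertices, `Δ(G₁) ≤ Δ`, `ν(G₁) ≤ ν`, `Δν + ⌊ν/⌈Δ/2⌉⌋⌊Δ/2⌋` edges), then there is another
such extremal graph `G₂` not isomorphic to `G₁`. -/
theorem exists_nonisomorphic_extremal (Δ ν : ℕ) (hΔ : 2 ≤ Δ) (hν : 2 ≤ ν)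
    (hndvd : ¬ ((Δ + 1) / 2 ∣ ν))
    {V : Type*} [Fintype V] (G₁ : SimpleGraph V)
    (hiso : ∀ v, ∃ u, G₁.Adj v u)
    (hdeg : maxDeg G₁ ≤ Δ) (hmat : matNum G₁ ≤ ν)
    (hE : edgeCount G₁ = Δ * ν + (ν / ((Δ + 1) / 2)) * (Δ / 2)) :
    ∃ (n : ℕ) (G₂ : SimpleGraph (Fin n)),
      (∀ v, ∃ u, G₂.Adj v u) ∧ maxDeg G₂ ≤ Δ ∧ matNum G₂ ≤ ν ∧
      edgeCount G₂ = Δ * ν + (ν / ((Δ + 1) / 2)) * (Δ / 2) ∧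
      ¬ Nonempty (G₂ ≃g G₁) := by
  classical
  set j := (Δ + 1) / 2 with hjdef
  have hj2 : 2 ≤ j := by
    rcases Nat.lt_or_ge j 2 with h | h
    · exfalso
      interval_cases j
      · omega
      · exact hndvd (one_dvd ν)
    · exact h
  have hΔ3 : 3 ≤ Δ := by omega
  have hp : Δ = 2*j ∨ Δ + 1 = 2*j := by omega
  set t := ν / j with htdef
  set r := ν % j with hrdef
  have hνeq : j * t + r = ν := by rw [htdef, hrdef]; exact Nat.div_add_mod ν j
  have hr1 : 1 ≤ r := by
    rcases Nat.eq_zero_or_pos r with h | h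
    · exact absurd (Nat.dvd_iff_mod_eq_zero.mpr (by rw [← hrdef]; exact h)) hndvd
    · exact h
  have hrj : r < j := by rw [hrdef]; exact Nat.mod_lt ν (by omega)
  obtain ⟨GJ, hJe, hJd, hJi⟩ := Aux.blockJ Δ j hj2 hp
  obtain ⟨GX, hXe, hXd, hXi⟩ := Aux.blockX' Δ j hj2 hp
  obtain ⟨hSe, hSd, hSi, -⟩ := Aux.star_spec Δ hΔ3
  obtain ⟨hKe, hKd, hKi, -⟩ := Aux.k2d_spec Δ hΔ3
  have hJm : Aux.MB GJ j := by
    have := Aux.MB_fin GJ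
    rwa [show (2*j+1)/2 = j from by omega] at this
  have hXm : Aux.MB GX (j+1) := by
    have := Aux.MB_fin GX
    rwa [show (2*j+3)/2 = j+1 from by omega] at this
  have hSm := Aux.MB_star Δ hΔ3
  have hKm := Aux.MB_k2d Δ hΔ3
  by_cases hc : Fintype.card V = t*(2*j+1) + (r*(Δ+1) + 0*(Δ+2))
  · -- card V matches construction A, so use construction B
    rcases Nat.eq_zero_or_pos t with ht0 | ht1
    · -- t = 0 : B = (r-2) stars + one K_{2,Δ}
      have hjt0 : j*t = 0 := by rw [ht0, Nat.mul_zero]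
      have hrν : r = ν := by omega
      obtain ⟨r'', hr''⟩ : ∃ r'', r = r'' + 2 := ⟨r - 2, by omega⟩
      obtain ⟨GB, hB1, hB2, hB3, hB4⟩ := Aux.build 0 r'' 1 j 1 2
        (Δ*j + Δ/2) Δ (2*Δ) Δ GJ (Aux.star Δ) (Aux.k2d Δ)
        hJm hSm hKm hJe hSe hKe hJd hSd hKd hJi hSi hKi
      refine ⟨_, GB, hB1, hB2, ?_, ?_, ?_⟩
      · exact le_trans hB3 (by omega)
      · rw [hB4, ← hνeq, ht0, hr'']; ring
      · rintro ⟨φ⟩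
        have hcards : Fintype.card (Fin (0*(2*j+1) + (r''*(Δ+1) + 1*(Δ+2))))
            = Fintype.card V := Fintype.card_congr φ.toEquiv
        rw [Fintype.card_fin, hc, ht0] at hcards
        have hx : r*(Δ+1) = r''*(Δ+1) + 2*(Δ+1) := by rw [hr'']; ring
        generalize hQ : r''*(Δ+1) = Q at hcards hx
        omega
    · -- t ≥ 1 : B = (t-1) blocks J + one block X + (r-1) stars
      obtain ⟨t', ht'⟩ : ∃ t', t = t' + 1 := ⟨t - 1, by omega⟩
      obtain ⟨r', hr'⟩ : ∃ r', r = r' + 1 := ⟨r - 1, by omega⟩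
      obtain ⟨GB, hB1, hB2, hB3, hB4⟩ := Aux.build t' 1 r' j (j+1) 1
        (Δ*j + Δ/2) (Δ*(j+1) + Δ/2) Δ Δ GJ GX (Aux.star Δ)
        hJm hXm hSm hJe hXe hSe hJd hXd hSd hJi hXi hSi
      refine ⟨_, GB, hB1, hB2, ?_, ?_, ?_⟩
      · refine le_trans hB3 (le_of_eq ?_)
        have h1 : t'*j + j = j*t := by rw [ht']; ring
        generalize hP : t'*j = P at h1 ⊢
        generalize hR : j*t = R at h1 hνeq
        omega
      · rw [hB4, ← hνeq, ht', hr']; ring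
      · rintro ⟨φ⟩
        have hcards : Fintype.card (Fin (t'*(2*j+1) + (1*(2*j+3) + r'*(Δ+1))))
            = Fintype.card V := Fintype.card_congr φ.toEquiv
        rw [Fintype.card_fin, hc] at hcards
        have hx1 : t*(2*j+1) = t'*(2*j+1) + (2*j+1) := by rw [ht']; ring
        have hx2 : r*(Δ+1) = r'*(Δ+1) + (Δ+1) := by rw [hr']; ring
        generalize hP : t'*(2*j+1) = P at hcards hx1
        generalize hQ : r'*(Δ+1) = Q at hcards hx2
        omega
  · -- card V differs from construction A, so use construction A
    obtain ⟨GA, hA1, hA2, hA3, hA4⟩ := Aux.build t r 0 j 1 2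
      (Δ*j + Δ/2) Δ (2*Δ) Δ GJ (Aux.star Δ) (Aux.k2d Δ)
      hJm hSm hKm hJe hSe hKe hJd hSd hKd hJi hSi hKi
    refine ⟨_, GA, hA1, hA2, ?_, ?_, ?_⟩
    · refine le_trans hA3 (le_of_eq ?_)
      have h1 : t*j = j*t := mul_comm _ _
      generalize hP : t*j = P at h1 ⊢
      generalize hR : j*t = R at h1 hνeq
      omega
    · rw [hA4, ← hνeq]; ring
    · rintro ⟨φ⟩
      have hcards : Fintype.card (Fin (t*(2*j+1) + (r*(Δ+1) + 0*(Δ+2))))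
          = Fintype.card V := Fintype.card_congr φ.toEquiv
      rw [Fintype.card_fin] at hcards
      exact hc hcards.symm
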